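/- arXiv:1401.5551 — 4 statements merged into one kernel-verified Lean document; each statement's English description precedes it below -/
import Mathlib

section
/- Let G and G' be topologically sorted DAGs on the same node set Fin n. There exists a permutation s ∈ Equiv.Perm (Fin n) such that the ℂ-algebra automorphism of R induced by s maps the prime ideal p_G onto p_{G'}, if and only if p_G ∩ R^Π = p_{G'} ∩ R^Π, where R^Π is the subalgebra of polynomials invariant under all permutations of Fin n. -/
open MvPolynomial Matrix

set_option maxHeartbeats 1000000

noncomputable section

/-- The parent set of a node `j` in the DAG with edge relation `E`. -/
def parents {n : ℕ} (E : Fin n → Fin n → Prop) [DecidableRel E] (j : Fin n) : Finset (Fin n) :=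
  Finset.univ.filter (fun i => E i j)

/-- The minor of `M` with rows `A` and columns `B`, each listed in increasing order. -/
def fminor {n : ℕ} {R : Type*} [CommRing R] (M : Matrix (Fin n) (Fin n) R)
    (A B : Finset (Fin n)) (h : B.card = A.card) : R :=
  Matrix.det (Matrix.of fun k l : Fin A.card =>
    M (A.orderEmbOfFin rfl k) (B.orderEmbOfFin h l))

/-- The generic symmetric matrix, with `(i,j)` entry the variable indexed by the unordered
pair `s(i,j)`. -/
def genMat (n : ℕ) : Matrix (Fin n) (Fin n) (MvPolynomial (Sym2 (Fin n)) ℂ) :=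
  fun i j => X (Sym2.mk i j)

/-- The ideal of imposed relations `I_G`, generated by the minors `det M_{{i}∪K,{j}∪K}` over all
pairs `i < j` with `¬ E i j`, where `K = pa(j)`. -/
def impIdeal {n : ℕ} (E : Fin n → Fin n → Prop) [DecidableRel E] :
    Ideal (MvPolynomial (Sym2 (Fin n)) ℂ) :=
  Ideal.span { f | ∃ i j : Fin n, ∃ _ : i < j, ∃ _ : ¬ E i j,
    ∃ h : (insert j (parents E j)).card = (insert i (parents E j)).card,
      f = fminor (genMat n) (insert i (parents E j)) (insert j (parents E j)) h }

/-- The product `θ₀` of all principal minors of the generic symmetric matrix. -/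
def theta0 (n : ℕ) : MvPolynomial (Sym2 (Fin n)) ℂ :=
  ∏ A : Finset (Fin n), fminor (genMat n) A A rfl

/-- The saturation `{f | ∃ m, g ^ m * f ∈ I}` of an ideal `I` at an element `g`. -/
def satIdeal {R : Type*} [CommRing R] (I : Ideal R) (g : R) : Ideal R where
  carrier := {f | ∃ m : ℕ, g ^ m * f ∈ I}
  zero_mem' := ⟨0, by simp⟩
  add_mem' := by
    rintro a b ⟨ma, ha⟩ ⟨mb, hb⟩
    refine ⟨ma + mb, ?_⟩
    have h : g ^ (ma + mb) * (a + b) = g ^ mb * (g ^ ma * a) + g ^ ma * (g ^ mb * b) := by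
      ring
    rw [h]
    exact I.add_mem (I.mul_mem_left _ ha) (I.mul_mem_left _ hb)
  smul_mem' := by
    rintro c a ⟨m, hm⟩
    refine ⟨m, ?_⟩
    have h : g ^ m * (c • a) = c * (g ^ m * a) := by
      simp only [smul_eq_mul]; ring
    rw [h]
    exact I.mul_mem_left _ hm


/-- The saturation `p_G` of `I_G` at `θ₀`. -/
def satPG {n : ℕ} (E : Fin n → Fin n → Prop) [DecidableRel E] :
    Ideal (MvPolynomial (Sym2 (Fin n)) ℂ) :=
  satIdeal (impIdeal E) (theta0 n)

namespace Prim

variable {A : Type*} [CommRing A] {n : ℕ}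

lemma pow_entry_zero (Λ : Matrix (Fin n) (Fin n) A) (h : ∀ i j : Fin n, j ≤ i → Λ i j = 0)
    (k : ℕ) : ∀ i j : Fin n, (j : ℕ) < (i : ℕ) + k → (Λ ^ k) i j = 0 := by
  induction k with
  | zero =>
    intro i j hij
    rw [pow_zero]
    exact Matrix.one_apply_ne (by intro he; subst he; omega)
  | succ k ih =>
    intro i j hij
    rw [pow_succ']
    rw [Matrix.mul_apply]
    apply Finset.sum_eq_zero
    intro m _
    by_cases hm : m ≤ i
    · rw [h i m hm, zero_mul]
    · push_neg at hm
      rw [ih m j (by omega), mul_zero]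

lemma pow_n_zero (Λ : Matrix (Fin n) (Fin n) A) (h : ∀ i j : Fin n, j ≤ i → Λ i j = 0) :
    Λ ^ n = 0 := by
  ext i j
  rw [pow_entry_zero Λ h n i j (by omega)]
  rfl

lemma geom_inv_left (Λ : Matrix (Fin n) (Fin n) A) (h : ∀ i j : Fin n, j ≤ i → Λ i j = 0) :
    (1 - Λ) * (∑ k ∈ Finset.range n, Λ ^ k) = 1 := by
  have hn := pow_n_zero Λ h
  have h2 := mul_geom_sum Λ n
  rw [hn, zero_sub] at h2
  calc (1 - Λ) * (∑ k ∈ Finset.range n, Λ ^ k)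
      = -((Λ - 1) * ∑ k ∈ Finset.range n, Λ ^ k) := by rw [← neg_sub Λ 1, neg_mul]
    _ = 1 := by rw [h2, neg_neg]

lemma geom_inv_right (Λ : Matrix (Fin n) (Fin n) A) (h : ∀ i j : Fin n, j ≤ i → Λ i j = 0) :
    (∑ k ∈ Finset.range n, Λ ^ k) * (1 - Λ) = 1 := by
  have hn := pow_n_zero Λ h
  have h2 := geom_sum_mul Λ n
  rw [hn, zero_sub] at h2
  calc (∑ k ∈ Finset.range n, Λ ^ k) * (1 - Λ)
      = -((∑ k ∈ Finset.range n, Λ ^ k) * (Λ - 1)) := by rw [← neg_sub Λ 1, mul_neg]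
    _ = 1 := by rw [h2, neg_neg]

lemma geom_tri (Λ : Matrix (Fin n) (Fin n) A) (h : Λ.BlockTriangular id) :
    (∑ k ∈ Finset.range n, Λ ^ k).BlockTriangular id := by
  have hpow : ∀ k : ℕ, (Λ ^ k).BlockTriangular id := by
    intro k
    induction k with
    | zero => rw [pow_zero]; exact Matrix.blockTriangular_one
    | succ k ih => rw [pow_succ]; exact ih.mul h
  have : ∀ (s : Finset ℕ), (∑ k ∈ s, Λ ^ k).BlockTriangular id := by
    intro s
    induction s using Finset.induction with
    | empty => simpa using Matrix.blockTriangular_zero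
    | insert _ _ hx ih =>
      rw [Finset.sum_insert hx]
      exact (hpow _).add ih
  exact this _

/-- determinants of two submatrices of the same square matrix along different bijections
agree up to a unit. -/
lemma det_submatrix_units {ι κ : Type*} [DecidableEq ι] [Fintype ι] [DecidableEq κ] [Fintype κ]
    (M : Matrix κ κ A) (e f : ι ≃ κ) :
    ∃ u : Aˣ, (M.submatrix ⇑e ⇑f).det = (u : A) * M.det := by
  have h1 : M.submatrix ⇑e ⇑f = (M.submatrix ⇑e ⇑e).submatrix _root_.id ⇑(f.trans e.symm) := by
    ext k l
    simp [Matrix.submatrix_apply]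
  rw [h1, Matrix.det_permute' (f.trans e.symm) (M.submatrix ⇑e ⇑e),
    Matrix.det_submatrix_equiv_self]
  rcases Int.units_eq_one_or (Equiv.Perm.sign (f.trans e.symm)) with hs | hs
  · exact ⟨1, by rw [hs]; simp⟩
  · refine ⟨⟨-1, -1, by ring, by ring⟩, by rw [hs]; simp⟩

/-- equiv between a disjoint union of finsets and their union. -/
def sumEquiv {γ : Type*} [DecidableEq γ] (K T U : Finset γ) (hd : Disjoint K T)
    (hu : K ∪ T = U) : (↥K ⊕ ↥T) ≃ ↥U where
  toFun := Sum.elim (fun k => ⟨↑k, by rw [← hu]; exact Finset.mem_union_left _ k.2⟩)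
    (fun t => ⟨↑t, by rw [← hu]; exact Finset.mem_union_right _ t.2⟩)
  invFun x := if h : (↑x : γ) ∈ K then Sum.inl ⟨↑x, h⟩ else
    Sum.inr ⟨↑x, by
      have hx : (↑x : γ) ∈ K ∪ T := by rw [hu]; exact x.2
      exact (Finset.mem_union.mp hx).resolve_left h⟩
  left_inv x := by
    rcases x with k | t
    · simp
    · have : (↑t : γ) ∉ K := fun hc => (Finset.disjoint_left.mp hd) hc t.2
      simp [this]
  right_inv x := by
    by_cases h : (↑x : γ) ∈ K <;> simp [h]

@[simp] lemma sumEquiv_coe {γ : Type*} [DecidableEq γ] (K T U : Finset γ) (hd : Disjoint K T)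
    (hu : K ∪ T = U) (x : ↥K ⊕ ↥T) :
    (↑(sumEquiv K T U hd hu x) : γ) = Sum.elim (fun k : ↥K => (↑k : γ)) (fun t : ↥T => ↑t) x := by
  rcases x with k | t <;> rfl

/-- equiv between `insert x K` and `K ⊕ Unit`. -/
def insEquiv {γ : Type*} [DecidableEq γ] (K : Finset γ) (x : γ) (hx : x ∉ K) :
    ↥(insert x K) ≃ (↥K ⊕ Unit) where
  toFun y := if h : (↑y : γ) ∈ K then Sum.inl ⟨↑y, h⟩ else Sum.inr ()
  invFun := Sum.elim (fun k => ⟨↑k, Finset.mem_insert_of_mem k.2⟩)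
    (fun _ => ⟨x, Finset.mem_insert_self x K⟩)
  left_inv y := by
    by_cases h : (↑y : γ) ∈ K
    · simp [h]
    · have hy := y.2
      rw [Finset.mem_insert] at hy
      have hyx : (↑y : γ) = x := hy.resolve_right h
      simp only [hyx, dif_neg hx, Sum.elim_inr]
      exact Subtype.ext hyx.symm
  right_inv z := by
    rcases z with k | u
    · simp [k.2]
    · simp [hx]

lemma insEquiv_coe {γ : Type*} [DecidableEq γ] (K : Finset γ) (x : γ) (hx : x ∉ K)
    (y : ↥(insert x K)) :
    Sum.elim (fun k : ↥K => (↑k : γ)) (fun _ => x) (insEquiv K x hx y) = ↑y := by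
  unfold insEquiv
  dsimp only [Equiv.coe_fn_mk]
  by_cases h : (↑y : γ) ∈ K
  · simp [h]
  · have hy := y.2
    rw [Finset.mem_insert] at hy
    simp [h, (hy.resolve_right h).symm]

variable (n : ℕ)

abbrev Rr (n : ℕ) := MvPolynomial (Sym2 (Fin n)) ℂ
abbrev Vars (n : ℕ) := (Fin n × Fin n) ⊕ Fin n
abbrev Pp (n : ℕ) := MvPolynomial (Vars n) ℂ
abbrev Ss (n : ℕ) := Localization.Away (theta0 n)

def locm : Rr n →+* Ss n := algebraMap (Rr n) (Ss n)

def Sg : Matrix (Fin n) (Fin n) (Ss n) := Matrix.of fun i j => locm n (X (Sym2.mk i j))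

lemma Sg_apply (i j : Fin n) : Sg n i j = locm n (X (Sym2.mk i j)) := rfl

lemma Sg_symm (i j : Fin n) : Sg n i j = Sg n j i := by
  rw [Sg_apply, Sg_apply, Sym2.eq_swap]

lemma Sg_transpose : (Sg n)ᵀ = Sg n := by
  ext i j
  rw [Matrix.transpose_apply]
  exact Sg_symm n j i

def evI : Rr n →ₐ[ℂ] ℂ :=
  aeval (fun v => Sym2.lift ⟨fun i j => if i = j then (1:ℂ) else 0, fun a b => by
    show (if a = b then (1:ℂ) else 0) = (if b = a then (1:ℂ) else 0)
    by_cases h : a = b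
    · subst h; rfl
    · rw [if_neg h, if_neg (fun hc => h hc.symm)]⟩ v)

lemma evI_fminor (A : Finset (Fin n)) : evI n (fminor (genMat n) A A rfl) = 1 := by
  unfold fminor
  have h1 : evI n (Matrix.of fun k l : Fin A.card =>
      genMat n (A.orderEmbOfFin rfl k) (A.orderEmbOfFin rfl l)).det
      = ((Matrix.of fun k l : Fin A.card =>
        genMat n (A.orderEmbOfFin rfl k) (A.orderEmbOfFin rfl l)).map (evI n)).det :=
    RingHom.map_det (evI n).toRingHom _
  rw [h1]
  have h2 : (Matrix.of fun k l : Fin A.card =>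
      genMat n (A.orderEmbOfFin rfl k) (A.orderEmbOfFin rfl l)).map (evI n)
      = (1 : Matrix (Fin A.card) (Fin A.card) ℂ) := by
    ext k l
    have : evI n (genMat n (A.orderEmbOfFin rfl k) (A.orderEmbOfFin rfl l))
        = if A.orderEmbOfFin rfl k = A.orderEmbOfFin rfl l then (1:ℂ) else 0 := by
      show evI n (X (Sym2.mk _ _)) = _
      rw [evI, aeval_X, Sym2.lift_mk]
    rw [Matrix.map_apply, Matrix.of_apply, this, Matrix.one_apply]
    by_cases h : k = l
    · rw [if_pos h, if_pos (by rw [h])]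
    · rw [if_neg h, if_neg (fun hc => h ((A.orderEmbOfFin rfl).injective hc))]
  rw [h2, Matrix.det_one]

lemma theta0_ne_zero : theta0 n ≠ 0 := by
  intro hc
  have h1 : evI n (theta0 n) = 1 := by
    unfold theta0
    rw [map_prod]
    exact Finset.prod_eq_one (fun A _ => evI_fminor n A)
  rw [hc, map_zero] at h1
  exact zero_ne_one h1

lemma locm_inj : Function.Injective (locm n) :=
  IsLocalization.injective (Ss n)
    (powers_le_nonZeroDivisors_of_noZeroDivisors (theta0_ne_zero n))

lemma isUnit_fminor (A : Finset (Fin n)) : IsUnit (locm n (fminor (genMat n) A A rfl)) := by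
  have hθ : IsUnit (locm n (theta0 n)) := IsLocalization.Away.algebraMap_isUnit _
  refine isUnit_of_dvd_unit ?_ hθ
  exact map_dvd _ (Finset.dvd_prod_of_mem _ (Finset.mem_univ A))

def subM (A : Finset (Fin n)) : Matrix ↥A ↥A (Ss n) := Matrix.of fun a b => Sg n ↑a ↑b

lemma subM_apply (A : Finset (Fin n)) (a b : ↥A) : subM n A a b = Sg n ↑a ↑b := rfl

lemma det_subM (A : Finset (Fin n)) :
    (subM n A).det = locm n (fminor (genMat n) A A rfl) := by
  unfold fminor
  have h1 : locm n (Matrix.of fun k l : Fin A.card =>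
      genMat n (A.orderEmbOfFin rfl k) (A.orderEmbOfFin rfl l)).det
      = ((Matrix.of fun k l : Fin A.card =>
        genMat n (A.orderEmbOfFin rfl k) (A.orderEmbOfFin rfl l)).map (locm n)).det :=
    RingHom.map_det (locm n) _
  rw [h1]
  have h2 : (Matrix.of fun k l : Fin A.card =>
      genMat n (A.orderEmbOfFin rfl k) (A.orderEmbOfFin rfl l)).map (locm n)
      = (subM n A).submatrix ⇑(A.orderIsoOfFin rfl).toEquiv ⇑(A.orderIsoOfFin rfl).toEquiv := by
    ext k l
    rw [Matrix.map_apply, Matrix.of_apply, Matrix.submatrix_apply, subM_apply]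
    have hk : ((A.orderIsoOfFin rfl).toEquiv k : Fin n) = A.orderEmbOfFin rfl k :=
      Finset.coe_orderIsoOfFin_apply A rfl k
    have hl : ((A.orderIsoOfFin rfl).toEquiv l : Fin n) = A.orderEmbOfFin rfl l :=
      Finset.coe_orderIsoOfFin_apply A rfl l
    rw [hk, hl]
    rfl
  rw [h2, Matrix.det_submatrix_equiv_self]

lemma isUnit_det_subM (A : Finset (Fin n)) : IsUnit (subM n A).det := by
  rw [det_subM]; exact isUnit_fminor n A

def lamcol (j : Fin n) : ↥(Finset.Iio j) → Ss n :=
  (subM n (Finset.Iio j))⁻¹ *ᵥ (fun m : ↥(Finset.Iio j) => Sg n ↑m j)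

def lam (i j : Fin n) : Ss n :=
  if h : i < j then lamcol n j ⟨i, Finset.mem_Iio.mpr h⟩ else 0

lemma lam_eq_zero {i j : Fin n} (h : ¬ i < j) : lam n i j = 0 := dif_neg h

lemma lam_spec (j : Fin n) (i : Fin n) (hij : i < j) :
    ∑ m ∈ Finset.Iio j, Sg n i m * lam n m j = Sg n i j := by
  have h1 : subM n (Finset.Iio j) *ᵥ lamcol n j = fun m : ↥(Finset.Iio j) => Sg n ↑m j := by
    unfold lamcol
    rw [Matrix.mulVec_mulVec, Matrix.mul_nonsing_inv _ (isUnit_det_subM n _),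
      Matrix.one_mulVec]
  have h2 := congrFun h1 ⟨i, Finset.mem_Iio.mpr hij⟩
  simp only [Matrix.mulVec, dotProduct] at h2
  calc ∑ m ∈ Finset.Iio j, Sg n i m * lam n m j
      = ∑ m : ↥(Finset.Iio j), Sg n i ↑m * lam n ↑m j := (Finset.sum_coe_sort _ _).symm
    _ = ∑ m : ↥(Finset.Iio j), subM n (Finset.Iio j) ⟨i, Finset.mem_Iio.mpr hij⟩ m
          * lamcol n j m := by
        apply Finset.sum_congr rfl
        intro m _
        have hm : (↑m : Fin n) < j := Finset.mem_Iio.mp m.2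
        rw [subM_apply, lam, dif_pos hm]
    _ = Sg n i j := h2

def Lm : Matrix (Fin n) (Fin n) (Ss n) := Matrix.of fun i j => lam n i j

lemma Lm_apply (i j : Fin n) : Lm n i j = lam n i j := rfl

lemma Lm_strict : ∀ i j : Fin n, j ≤ i → Lm n i j = 0 :=
  fun _ j h => lam_eq_zero n (not_lt.mpr h)

def Um : Matrix (Fin n) (Fin n) (Ss n) := 1 - Lm n

lemma Um_eq : Um n = 1 - Lm n := rfl

def omg (j : Fin n) : Ss n := Sg n j j - ∑ m ∈ Finset.Iio j, Sg n j m * lam n m j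

lemma SLm_apply (i j : Fin n) :
    (Sg n * Lm n) i j = ∑ m ∈ Finset.Iio j, Sg n i m * lam n m j := by
  rw [Matrix.mul_apply]
  symm
  apply Finset.sum_subset (Finset.subset_univ _)
  intro m _ hm
  rw [lam_eq_zero n (by simpa [Finset.mem_Iio] using hm), mul_zero]

lemma V_apply (i j : Fin n) :
    (Sg n * Um n) i j = Sg n i j - ∑ m ∈ Finset.Iio j, Sg n i m * lam n m j := by
  have h : Sg n * Um n = Sg n - Sg n * Lm n := by
    rw [Um_eq, Matrix.mul_sub, Matrix.mul_one]
  rw [h, Matrix.sub_apply, SLm_apply]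

lemma V_upper {i j : Fin n} (h : i < j) : (Sg n * Um n) i j = 0 := by
  rw [V_apply, lam_spec n j i h, sub_self]

lemma V_diag (j : Fin n) : (Sg n * Um n) j j = omg n j := by
  rw [V_apply]; rfl

lemma LtV_apply (V : Matrix (Fin n) (Fin n) (Ss n)) (i j : Fin n) :
    ((Lm n)ᵀ * V) i j = ∑ m ∈ Finset.Iio i, lam n m i * V m j := by
  rw [Matrix.mul_apply]
  symm
  apply Finset.sum_subset (Finset.subset_univ _)
  intro m _ hm
  rw [lam_eq_zero n (by simpa [Finset.mem_Iio] using hm), zero_mul]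

lemma UtSU : (Um n)ᵀ * Sg n * Um n = Matrix.diagonal (omg n) := by
  have haux : ∀ i j : Fin n, i ≤ j →
      ((Um n)ᵀ * Sg n * Um n) i j = if i = j then omg n i else 0 := by
    intro i j hij
    have hassoc : (Um n)ᵀ * Sg n * Um n = (Um n)ᵀ * (Sg n * Um n) := Matrix.mul_assoc _ _ _
    rw [hassoc]
    have hU : (Um n)ᵀ = 1 - (Lm n)ᵀ := by
      rw [Um_eq, Matrix.transpose_sub, Matrix.transpose_one]
    rw [hU, Matrix.sub_mul, Matrix.one_mul, Matrix.sub_apply, LtV_apply]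
    rcases lt_or_eq_of_le hij with hlt | heq
    · rw [V_upper n hlt, if_neg (ne_of_lt hlt)]
      rw [Finset.sum_eq_zero, sub_zero]
      intro m hm
      rw [V_upper n (lt_trans (Finset.mem_Iio.mp hm) hlt), mul_zero]
    · subst heq
      rw [V_diag, if_pos rfl]
      rw [Finset.sum_eq_zero, sub_zero]
      intro m hm
      rw [V_upper n (Finset.mem_Iio.mp hm), mul_zero]
  have hsym : ((Um n)ᵀ * Sg n * Um n)ᵀ = (Um n)ᵀ * Sg n * Um n := by
    rw [Matrix.transpose_mul, Matrix.transpose_mul, Matrix.transpose_transpose, Sg_transpose]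
    rw [Matrix.mul_assoc]
  ext i j
  rcases le_or_gt i j with hij | hji
  · rw [haux i j hij, Matrix.diagonal_apply]
  · have h1 : ((Um n)ᵀ * Sg n * Um n) i j = ((Um n)ᵀ * Sg n * Um n) j i := by
      conv_lhs => rw [← hsym]
      rfl
    rw [h1, haux j i (le_of_lt hji), if_neg (ne_of_lt hji),
      Matrix.diagonal_apply_ne _ (ne_of_gt hji)]

def Wm : Matrix (Fin n) (Fin n) (Ss n) := ∑ k ∈ Finset.range n, (Lm n) ^ k

lemma UWm : Um n * Wm n = 1 := by
  rw [Um_eq]; exact geom_inv_left (Lm n) (Lm_strict n)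

lemma WUm : Wm n * Um n = 1 := by
  rw [Um_eq]; exact geom_inv_right (Lm n) (Lm_strict n)

lemma Sigma_eq_WDW : Sg n = (Wm n)ᵀ * Matrix.diagonal (omg n) * Wm n := by
  have h2 : (Um n)ᵀ * Sg n * Um n * Wm n = Matrix.diagonal (omg n) * Wm n := by
    rw [UtSU]
  calc Sg n = (1 : Matrix (Fin n) (Fin n) (Ss n))ᵀ * Sg n * 1 := by
        rw [Matrix.transpose_one, Matrix.one_mul, Matrix.mul_one]
    _ = (Um n * Wm n)ᵀ * Sg n * (Um n * Wm n) := by rw [UWm]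
    _ = (Wm n)ᵀ * ((Um n)ᵀ * Sg n * Um n * Wm n) := by
        rw [Matrix.transpose_mul]
        simp only [Matrix.mul_assoc]
    _ = (Wm n)ᵀ * (Matrix.diagonal (omg n) * Wm n) := by rw [h2]
    _ = (Wm n)ᵀ * Matrix.diagonal (omg n) * Wm n := by rw [Matrix.mul_assoc]
/-! ### The polynomial parametrization side -/

def Lp : Matrix (Fin n) (Fin n) (Pp n) :=
  Matrix.of fun i j => if i < j then (X (Sum.inl (i, j)) : Pp n) else 0

lemma Lp_apply (i j : Fin n) :
    Lp n i j = if i < j then (X (Sum.inl (i, j)) : Pp n) else 0 := rfl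

lemma Lp_strict : ∀ i j : Fin n, j ≤ i → Lp n i j = 0 :=
  fun _ _ h => if_neg (not_lt.mpr h)

def Wp : Matrix (Fin n) (Fin n) (Pp n) := ∑ k ∈ Finset.range n, (Lp n) ^ k

def Dp : Matrix (Fin n) (Fin n) (Pp n) := Matrix.diagonal (fun i => X (Sum.inr i))

def Sp : Matrix (Fin n) (Fin n) (Pp n) := (Wp n)ᵀ * Dp n * Wp n

lemma Sp_transpose : (Sp n)ᵀ = Sp n := by
  calc (Sp n)ᵀ = (Wp n)ᵀ * ((Wp n)ᵀ * Dp n)ᵀ := Matrix.transpose_mul _ _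
    _ = (Wp n)ᵀ * ((Dp n)ᵀ * Wp n) := by
        rw [Matrix.transpose_mul, Matrix.transpose_transpose]
    _ = (Wp n)ᵀ * (Dp n * Wp n) := by
        rw [show (Dp n)ᵀ = Dp n from Matrix.diagonal_transpose _]
    _ = Sp n := (Matrix.mul_assoc _ _ _).symm

lemma Sp_symm (i j : Fin n) : Sp n i j = Sp n j i := by
  calc Sp n i j = (Sp n)ᵀ j i := rfl
    _ = Sp n j i := by rw [Sp_transpose]

def phi : Rr n →+* Pp n :=
  eval₂Hom (C : ℂ →+* Pp n)
    (fun v => Sym2.lift ⟨fun i j => Sp n i j, fun a b => Sp_symm n a b⟩ v)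

lemma phi_X (i j : Fin n) : phi n (X (Sym2.mk i j)) = Sp n i j := by
  unfold phi
  rw [eval₂Hom_X']
  exact Sym2.lift_mk _ _ _

def psi : Pp n →+* Ss n :=
  eval₂Hom ((locm n).comp (C : ℂ →+* Rr n))
    (Sum.elim (fun p : Fin n × Fin n => lam n p.1 p.2) (omg n))

lemma psi_inl (i j : Fin n) : psi n (X (Sum.inl (i, j))) = lam n i j := by
  unfold psi; rw [eval₂Hom_X']; rfl

lemma psi_inr (i : Fin n) : psi n (X (Sum.inr i)) = omg n i := by
  unfold psi; rw [eval₂Hom_X']; rfl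

/-- pushing a ring hom through the geometric sum. -/
lemma map_Wgen {β : Type*} [CommRing β] (f : Pp n →+* β) (L : Matrix (Fin n) (Fin n) (Pp n)) :
    (∑ k ∈ Finset.range n, L ^ k).map f = ∑ k ∈ Finset.range n, (L.map f) ^ k := by
  have h1 : (∑ k ∈ Finset.range n, L ^ k).map f
      = f.mapMatrix (∑ k ∈ Finset.range n, L ^ k) := rfl
  rw [h1, map_sum]
  apply Finset.sum_congr rfl
  intro k _
  rw [map_pow]
  rfl

lemma map_Sp_gen {β : Type*} [CommRing β] (f : Pp n →+* β) :
    (Sp n).map f = ((Wp n).map f)ᵀ * ((Dp n).map f) * ((Wp n).map f) := by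
  have h1 : (Sp n).map f = f.mapMatrix (Sp n) := rfl
  have h5 : f.mapMatrix ((Wp n)ᵀ * Dp n * Wp n)
      = f.mapMatrix ((Wp n)ᵀ) * f.mapMatrix (Dp n) * f.mapMatrix (Wp n) := by
    rw [RingHom.map_mul, RingHom.map_mul]
  rw [h1, Sp, h5]
  have h2 : f.mapMatrix ((Wp n)ᵀ) = ((Wp n).map f)ᵀ := Matrix.transpose_map
  have h3 : f.mapMatrix (Dp n) = (Dp n).map f := rfl
  have h4 : f.mapMatrix (Wp n) = (Wp n).map f := rfl
  rw [h2, h3, h4]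

lemma map_Lp_psi : (Lp n).map (psi n) = Lm n := by
  ext i j
  rw [Matrix.map_apply, Lp_apply]
  by_cases h : i < j
  · rw [if_pos h, psi_inl]
    rfl
  · rw [if_neg h, map_zero]
    exact (lam_eq_zero n h).symm

lemma map_Wp_psi : (Wp n).map (psi n) = Wm n := by
  rw [Wp, map_Wgen, map_Lp_psi]
  rfl

lemma map_Dp_psi : (Dp n).map (psi n) = Matrix.diagonal (omg n) := by
  rw [Dp, Matrix.diagonal_map (map_zero _)]
  have hfun : (fun i => psi n (X (Sum.inr i))) = omg n := funext fun i => psi_inr n i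
  rw [hfun]

lemma psi_Sp (i j : Fin n) : psi n (Sp n i j) = Sg n i j := by
  have h := map_Sp_gen n (psi n)
  rw [map_Wp_psi, map_Dp_psi] at h
  have h2 : psi n (Sp n i j) = ((Sp n).map (psi n)) i j := rfl
  rw [h2, h, ← Sigma_eq_WDW]

lemma psi_comp_phi : (psi n).comp (phi n) = locm n := by
  apply MvPolynomial.ringHom_ext
  · intro c
    rw [RingHom.comp_apply]
    have h1 : phi n (C c) = C c := by unfold phi; rw [eval₂Hom_C]
    rw [h1]
    show psi n (C c) = locm n (C c)
    unfold psi
    rw [eval₂Hom_C]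
    rfl
  · intro v
    induction v using Sym2.ind with
    | _ i j =>
      rw [RingHom.comp_apply, phi_X, psi_Sp]
      rfl

/-! ### the graph restriction -/

variable (E : Fin n → Fin n → Prop) [DecidableRel E]

def rho : Pp n →+* Pp n :=
  eval₂Hom (C : ℂ →+* Pp n)
    (Sum.elim (fun p : Fin n × Fin n => if E p.1 p.2 then X (Sum.inl p) else 0)
      (fun i => X (Sum.inr i)))

lemma rho_inl (i j : Fin n) :
    rho n E (X (Sum.inl (i, j))) = if E i j then X (Sum.inl (i, j)) else 0 := by
  unfold rho; rw [eval₂Hom_X']; rfl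

lemma rho_inr (i : Fin n) : rho n E (X (Sum.inr i)) = X (Sum.inr i) := by
  unfold rho; rw [eval₂Hom_X']; rfl

def phiG : Rr n →+* Pp n := (rho n E).comp (phi n)

def LG : Matrix (Fin n) (Fin n) (Pp n) := (Lp n).map (rho n E)

def WG : Matrix (Fin n) (Fin n) (Pp n) := (Wp n).map (rho n E)

def SG : Matrix (Fin n) (Fin n) (Pp n) := (Sp n).map (rho n E)

lemma phiG_X (i j : Fin n) : phiG n E (X (Sym2.mk i j)) = SG n E i j := by
  rw [phiG, RingHom.comp_apply, phi_X]
  rfl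

lemma LG_apply (hE : ∀ i j, E i j → i < j) (i j : Fin n) :
    LG n E i j = if E i j then X (Sum.inl (i, j)) else 0 := by
  rw [LG, Matrix.map_apply, Lp_apply]
  by_cases h : i < j
  · rw [if_pos h, rho_inl]
  · rw [if_neg h, map_zero, if_neg (fun hc => h (hE i j hc))]

lemma LG_strict (hE : ∀ i j, E i j → i < j) : ∀ i j : Fin n, j ≤ i → LG n E i j = 0 := by
  intro i j h
  rw [LG_apply n E hE]
  exact if_neg (fun hc => absurd (hE i j hc) (not_lt.mpr h))

lemma WG_eq : WG n E = ∑ k ∈ Finset.range n, (LG n E) ^ k := by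
  rw [WG, Wp, map_Wgen]
  rfl

lemma map_Dp_rho : (Dp n).map (rho n E) = Dp n := by
  rw [Dp, Matrix.diagonal_map (map_zero _)]
  have hfun : (fun i : Fin n => rho n E (X (Sum.inr i))) = (fun i : Fin n => (X (Sum.inr i) : Pp n)) := by
    funext i; rw [rho_inr]
  rw [hfun]

lemma SG_eq : SG n E = (WG n E)ᵀ * Dp n * WG n E := by
  rw [SG, map_Sp_gen, map_Dp_rho]
  rfl

lemma SG_col (hE : ∀ i j, E i j → i < j) (k j : Fin n) (hkj : k < j) :
    SG n E k j = ∑ m ∈ parents E j, SG n E k m * X (Sum.inl (m, j)) := by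
  have h2 : WG n E * (1 - LG n E) = 1 := by
    rw [WG_eq]
    exact geom_inv_right _ (LG_strict n E hE)
  have h1 : SG n E * (1 - LG n E) = (WG n E)ᵀ * Dp n := by
    calc SG n E * (1 - LG n E)
        = (WG n E)ᵀ * Dp n * (WG n E * (1 - LG n E)) := by
          rw [SG_eq n E, Matrix.mul_assoc]
    _ = (WG n E)ᵀ * Dp n := by rw [h2, Matrix.mul_one]
  have hWGtri : (WG n E).BlockTriangular _root_.id := by
    rw [WG_eq]
    exact geom_tri _ (fun i j hij => LG_strict n E hE i j (le_of_lt hij))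
  have h3 : ((WG n E)ᵀ * Dp n) k j = 0 := by
    rw [Dp, Matrix.mul_diagonal, Matrix.transpose_apply, hWGtri hkj, zero_mul]
  have h5 : (SG n E * (1 - LG n E)) k j = 0 := by rw [h1, h3]
  have h6 : (SG n E * (1 - LG n E)) k j = SG n E k j - (SG n E * LG n E) k j := by
    rw [Matrix.mul_sub, Matrix.mul_one, Matrix.sub_apply]
  have h7 : (SG n E * LG n E) k j
      = ∑ m ∈ parents E j, SG n E k m * X (Sum.inl (m, j)) := by
    rw [Matrix.mul_apply, parents, Finset.sum_filter]
    apply Finset.sum_congr rfl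
    intro m _
    rw [LG_apply n E hE]
    by_cases hm : E m j
    · rw [if_pos hm, if_pos hm]
    · rw [if_neg hm, if_neg hm, mul_zero]
  rw [h6, h7] at h5
  exact sub_eq_zero.mp h5

lemma phiG_fminor_zero (hE : ∀ i j, E i j → i < j) (i j : Fin n) (hij : i < j) (hnE : ¬ E i j)
    (h : (insert j (parents E j)).card = (insert i (parents E j)).card) :
    phiG n E (fminor (genMat n) (insert i (parents E j)) (insert j (parents E j)) h) = 0 := by
  set K := parents E j with hK
  unfold fminor
  rw [RingHom.map_det, RingHom.mapMatrix_apply]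
  set rowemb := (insert i K).orderEmbOfFin rfl with hrowemb
  set colemb := (insert j K).orderEmbOfFin h with hcolemb
  set Mg := (Matrix.of fun k l : Fin (insert i K).card =>
    genMat n (rowemb k) (colemb l)).map (phiG n E) with hMgdef
  have hMg : ∀ k l, Mg k l = SG n E (rowemb k) (colemb l) := by
    intro k l
    rw [hMgdef, Matrix.map_apply, Matrix.of_apply]
    exact phiG_X n E (rowemb k) (colemb l)
  have hKlt : ∀ m ∈ K, m < j := by
    intro m hm
    rw [hK, parents, Finset.mem_filter] at hm
    exact hE m j hm.2
  have hjK : j ∉ K := fun hc => lt_irrefl j (hKlt j hc)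
  have hcol_mem : ∀ l, colemb l ∈ insert j K := by
    intro l
    have h1 : colemb l ∈ Set.range colemb := Set.mem_range_self l
    rw [hcolemb, Finset.range_orderEmbOfFin] at h1
    exact h1
  obtain ⟨l₀, hl₀⟩ : ∃ l₀, colemb l₀ = j := by
    have h1 : j ∈ Set.range ⇑colemb := by
      rw [hcolemb, Finset.range_orderEmbOfFin]
      exact Finset.mem_coe.mpr (Finset.mem_insert_self _ _)
    exact h1
  have hcolK : ∀ l, l ≠ l₀ → colemb l ∈ K := by
    intro l hl
    rcases Finset.mem_insert.mp (hcol_mem l) with h1 | h1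
    · exact absurd (colemb.injective (h1.trans hl₀.symm)) hl
    · exact h1
  have hrow_lt : ∀ k, rowemb k < j := by
    intro k
    have h1 : rowemb k ∈ insert i K := by
      have h2 : rowemb k ∈ Set.range ⇑rowemb := Set.mem_range_self k
      rw [hrowemb, Finset.range_orderEmbOfFin] at h2
      exact h2
    rcases Finset.mem_insert.mp h1 with h2 | h2
    · rw [h2]; exact hij
    · exact hKlt _ h2
  set v : Fin (insert i K).card → Pp n :=
    fun l => if l = l₀ then -1 else X (Sum.inl (colemb l, j)) with hv
  have hvne : v ≠ 0 := by
    intro hc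
    have h1 := congrFun hc l₀
    rw [hv] at h1
    simp only [if_pos rfl, Pi.zero_apply] at h1
    exact (neg_ne_zero.mpr one_ne_zero) h1
  have hMv : Mg *ᵥ v = 0 := by
    funext k
    simp only [Matrix.mulVec, dotProduct, Pi.zero_apply]
    have hterm : ∀ l, Mg k l * v l = if l = l₀ then -(SG n E (rowemb k) j)
        else SG n E (rowemb k) (colemb l) * X (Sum.inl (colemb l, j)) := by
      intro l
      by_cases hl : l = l₀
      · subst hl
        have hv1 : v l = -1 := if_pos rfl
        rw [hv1, hMg, hl₀, if_pos rfl]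
        ring
      · have hv2 : v l = X (Sum.inl (colemb l, j)) := if_neg hl
        rw [hv2, hMg, if_neg hl]
    calc ∑ l, Mg k l * v l
        = ∑ l, if l = l₀ then -(SG n E (rowemb k) j)
            else SG n E (rowemb k) (colemb l) * X (Sum.inl (colemb l, j)) :=
          Finset.sum_congr rfl (fun l _ => hterm l)
      _ = (∑ l ∈ Finset.univ.erase l₀,
            SG n E (rowemb k) (colemb l) * X (Sum.inl (colemb l, j)))
            + -(SG n E (rowemb k) j) := by
          rw [← Finset.sum_erase_add Finset.univ _ (Finset.mem_univ l₀)]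
          congr 1
          · apply Finset.sum_congr rfl
            intro l hl
            rw [if_neg (Finset.ne_of_mem_erase hl)]
          · rw [if_pos rfl]
      _ = (∑ m ∈ K, SG n E (rowemb k) m * X (Sum.inl (m, j)))
            + -(SG n E (rowemb k) j) := by
          congr 1
          apply Finset.sum_bij (fun l _ => colemb l)
          · intro l hl
            exact hcolK l (Finset.ne_of_mem_erase hl)
          · intro l1 hl1 l2 hl2 hval
            exact colemb.injective hval
          · intro m hm
            have h3 : m ∈ insert j K := Finset.mem_insert_of_mem hm
            have h4 : m ∈ Set.range ⇑colemb := by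
              rw [hcolemb, Finset.range_orderEmbOfFin]
              exact Finset.mem_coe.mpr h3
            obtain ⟨l, hl⟩ := h4
            refine ⟨l, Finset.mem_erase.mpr ⟨?_, Finset.mem_univ l⟩, hl⟩
            intro hc
            subst hc
            rw [hl₀] at hl
            subst hl
            exact hjK hm
          · intro l hl
            rfl
      _ = 0 := by
          rw [← SG_col n E hE (rowemb k) j (hrow_lt k)]
          ring
  exact (Matrix.exists_mulVec_eq_zero_iff).mp ⟨v, hvne, hMv⟩

lemma impIdeal_le_ker (hE : ∀ i j, E i j → i < j) : impIdeal E ≤ RingHom.ker (phiG n E) := by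
  rw [impIdeal, Ideal.span_le]
  rintro f ⟨i, j, hij, hnE, h, rfl⟩
  exact phiG_fminor_zero n E hE i j hij hnE h

/-! ### nonvanishing of the image of θ₀ -/

def ev0 : Pp n →+* MvPolynomial (Fin n) ℂ :=
  eval₂Hom (C : ℂ →+* MvPolynomial (Fin n) ℂ)
    (Sum.elim (fun _ => 0) (fun i => X i))

lemma ev0_inl (p : Fin n × Fin n) : ev0 n (X (Sum.inl p)) = 0 := by
  unfold ev0; rw [eval₂Hom_X']; rfl

lemma ev0_inr (i : Fin n) : ev0 n (X (Sum.inr i)) = X i := by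
  unfold ev0; rw [eval₂Hom_X']; rfl

lemma xi_Sp (hn : 1 ≤ n) (a b : Fin n) :
    (ev0 n) (rho n E (Sp n a b))
      = Matrix.diagonal (fun i => (X i : MvPolynomial (Fin n) ℂ)) a b := by
  set ξ := (ev0 n).comp (rho n E) with hξ
  have h0 : (ev0 n) (rho n E (Sp n a b)) = ((Sp n).map ξ) a b := rfl
  have hLp : (Lp n).map ξ = 0 := by
    apply Matrix.ext
    intro i j
    rw [Matrix.map_apply, Lp_apply, Matrix.zero_apply]
    by_cases hij : i < j
    · rw [if_pos hij, hξ, RingHom.comp_apply, rho_inl]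
      by_cases hEij : E i j
      · rw [if_pos hEij, ev0_inl]
      · rw [if_neg hEij, map_zero]
    · rw [if_neg hij, map_zero]
  have hWp : (Wp n).map ξ = 1 := by
    rw [Wp, map_Wgen, hLp]
    rw [Finset.sum_eq_single_of_mem 0 (Finset.mem_range.mpr hn)
      (fun k _ hk => zero_pow hk)]
    exact pow_zero _
  have hDp : (Dp n).map ξ = Matrix.diagonal (fun i => (X i : MvPolynomial (Fin n) ℂ)) := by
    rw [Dp, Matrix.diagonal_map (map_zero _)]
    have hfun : (fun i => ξ (X (Sum.inr i))) = (fun i => (X i : MvPolynomial (Fin n) ℂ)) := by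
      funext i
      rw [hξ, RingHom.comp_apply, rho_inr, ev0_inr]
    rw [hfun]
  rw [h0, map_Sp_gen n ξ, hWp, hDp, Matrix.transpose_one, Matrix.one_mul, Matrix.mul_one]

lemma phiG_theta_ne (hn : 1 ≤ n) : phiG n E (theta0 n) ≠ 0 := by
  intro hc
  have h1 : (ev0 n) (phiG n E (theta0 n)) = 0 := by rw [hc, map_zero]
  have h2 : (ev0 n) (phiG n E (theta0 n))
      = ∏ A : Finset (Fin n), (ev0 n) (phiG n E (fminor (genMat n) A A rfl)) := by
    rw [theta0, map_prod, map_prod]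
  have h3 : ∀ A : Finset (Fin n),
      (ev0 n) (phiG n E (fminor (genMat n) A A rfl)) ≠ 0 := by
    intro A
    unfold fminor
    rw [RingHom.map_det, RingHom.mapMatrix_apply, RingHom.map_det, RingHom.mapMatrix_apply]
    have h4 : ((Matrix.of fun k l : Fin A.card =>
        genMat n (A.orderEmbOfFin rfl k) (A.orderEmbOfFin rfl l)).map (phiG n E)).map (ev0 n)
        = Matrix.diagonal (fun k => (X (A.orderEmbOfFin rfl k) : MvPolynomial (Fin n) ℂ)) := by
      apply Matrix.ext
      intro k l
      rw [Matrix.map_apply, Matrix.map_apply, Matrix.of_apply]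
      have h5 : phiG n E (genMat n (A.orderEmbOfFin rfl k) (A.orderEmbOfFin rfl l))
          = rho n E (Sp n (A.orderEmbOfFin rfl k) (A.orderEmbOfFin rfl l)) := by
        rw [phiG, RingHom.comp_apply]
        congr 1
        exact phi_X n _ _
      rw [h5, xi_Sp n E hn]
      by_cases hkl : k = l
      · subst hkl
        rw [Matrix.diagonal_apply_eq, Matrix.diagonal_apply_eq]
      · rw [Matrix.diagonal_apply_ne _ (fun hc2 => hkl ((A.orderEmbOfFin rfl).injective hc2)),
          Matrix.diagonal_apply_ne _ hkl]
    rw [h4, Matrix.det_diagonal]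
    rw [Finset.prod_ne_zero_iff]
    intro k _
    exact MvPolynomial.X_ne_zero _
  rw [h2] at h1
  exact (Finset.prod_ne_zero_iff.mpr (fun A _ => h3 A)) h1
/-! ### Lemma A : non-edge regression coefficients lie in the localized ideal -/

lemma lam_mem (E : Fin n → Fin n → Prop) [DecidableRel E] (hE : ∀ i j, E i j → i < j)
    (i j : Fin n) (hij : i < j) (hnE : ¬ E i j) :
    lam n i j ∈ Ideal.map (locm n) (impIdeal E) := by
  set J := Ideal.map (locm n) (impIdeal E) with hJ
  set K := parents E j with hK
  set T := Finset.Iio j \ K with hT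
  have hKIio : K ⊆ Finset.Iio j := by
    intro m hm
    rw [hK, parents, Finset.mem_filter] at hm
    exact Finset.mem_Iio.mpr (hE m j hm.2)
  have hd : Disjoint K T := Finset.disjoint_sdiff
  have hu : K ∪ T = Finset.Iio j := Finset.union_sdiff_of_subset hKIio
  have hnotK : ∀ m : Fin n, m < j → m ∉ K → ¬ E m j := by
    intro m _ hmK hc
    exact hmK (by rw [hK, parents]; exact Finset.mem_filter.mpr ⟨Finset.mem_univ m, hc⟩)
  have hiK : i ∉ K := fun hc => hnE (by
    rw [hK, parents] at hc; exact (Finset.mem_filter.mp hc).2)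
  have hiT : i ∈ T := Finset.mem_sdiff.mpr ⟨Finset.mem_Iio.mpr hij, hiK⟩
  have hjK : j ∉ K := fun hc => lt_irrefl j (Finset.mem_Iio.mp (hKIio hc))
  -- the matrices
  set MK := subM n K with hMK
  set NKT : Matrix ↥K ↥T (Ss n) := Matrix.of fun a b => Sg n ↑a ↑b with hNKT
  set NTK : Matrix ↥T ↥K (Ss n) := Matrix.of fun a b => Sg n ↑a ↑b with hNTK
  set NTT := subM n T with hNTT
  set Cm := NTT - NTK * MK⁻¹ * NKT with hCm
  have hMKdet : IsUnit MK.det := isUnit_det_subM n K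
  letI : Invertible MK := Matrix.invertibleOfIsUnitDet MK hMKdet
  -- determinant of the big block matrix is a unit
  have hblock : (Matrix.fromBlocks MK NKT NTK NTT).det = (subM n (Finset.Iio j)).det := by
    have heq : Matrix.fromBlocks MK NKT NTK NTT
        = (subM n (Finset.Iio j)).submatrix ⇑(sumEquiv K T (Finset.Iio j) hd hu)
            ⇑(sumEquiv K T (Finset.Iio j) hd hu) := by
      apply Matrix.ext
      intro p q
      rcases p with a | a <;> rcases q with b | b <;> rfl
    rw [heq, Matrix.det_submatrix_equiv_self]
  have hCmdet : IsUnit Cm.det := by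
    have h1 := Matrix.det_fromBlocks₁₁ MK NKT NTK NTT
    rw [Matrix.invOf_eq_nonsing_inv, hblock, ← hCm] at h1
    have h2 : IsUnit (MK.det * Cm.det) := by rw [← h1]; exact isUnit_det_subM n _
    exact isUnit_of_mul_isUnit_right h2
  -- vectors
  set uK : ↥K → Ss n := fun k => Sg n ↑k j with huKdef
  set aK : ↥K → Ss n := fun k => lam n ↑k j with haK
  set lamT : ↥T → Ss n := fun m => lam n ↑m j with hlamT
  set cvec : ↥T → Ss n := fun t => Sg n ↑t j
    - (fun k : ↥K => Sg n ↑t ↑k) ⬝ᵥ (MK⁻¹ *ᵥ uK) with hcvecdef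
  -- each c t is, up to units, a generator of the ideal
  have hcvecJ : ∀ t : ↥T, cvec t ∈ J := by
    intro t
    have htT : (↑t : Fin n) ∈ Finset.Iio j ∧ (↑t : Fin n) ∉ K := Finset.mem_sdiff.mp t.2
    have htj : (↑t : Fin n) < j := Finset.mem_Iio.mp htT.1
    have htK : (↑t : Fin n) ∉ K := htT.2
    have hnEt : ¬ E ↑t j := hnotK ↑t htj htK
    have hcard : (insert j K).card = (insert (↑t : Fin n) K).card := by
      rw [Finset.card_insert_of_notMem hjK, Finset.card_insert_of_notMem htK]
    set Bm : Matrix ↥K Unit (Ss n) := Matrix.of fun k _ => Sg n ↑k j with hBm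
    set Ct : Matrix Unit ↥K (Ss n) := Matrix.of fun _ k => Sg n ↑t ↑k with hCt
    set Dt : Matrix Unit Unit (Ss n) := Matrix.of fun _ _ => Sg n ↑t j with hDt
    have hGt : (Matrix.fromBlocks MK Bm Ct Dt).det = MK.det * cvec t := by
      rw [Matrix.det_fromBlocks₁₁, Matrix.invOf_eq_nonsing_inv]
      congr 1
      rw [Matrix.det_unique, Matrix.sub_apply, hcvecdef]
      congr 1
      rw [Matrix.mul_assoc, Matrix.mul_apply]
      simp only [Matrix.mul_apply, Matrix.mulVec, dotProduct]
      rfl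
    -- the generator
    have hgen : fminor (genMat n) (insert (↑t : Fin n) K) (insert j K) hcard ∈ impIdeal E := by
      rw [impIdeal]
      apply Ideal.subset_span
      exact ⟨↑t, j, htj, hnEt, hcard, rfl⟩
    have hgenJ : locm n (fminor (genMat n) (insert (↑t : Fin n) K) (insert j K) hcard) ∈ J := by
      rw [hJ]
      exact Ideal.mem_map_of_mem _ hgen
    -- relate the two determinants
    have hfm : locm n (fminor (genMat n) (insert (↑t : Fin n) K) (insert j K) hcard)
        = ((Matrix.of fun a b : Fin n => Sg n a b).submatrix
            (⇑((insert (↑t : Fin n) K).orderEmbOfFin rfl))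
            (⇑((insert j K).orderEmbOfFin hcard))).det := by
      unfold fminor
      rw [RingHom.map_det, RingHom.mapMatrix_apply]
      congr 1
    set eR : Fin (insert (↑t : Fin n) K).card ≃ (↥K ⊕ Unit) :=
      ((insert (↑t : Fin n) K).orderIsoOfFin rfl).toEquiv.trans (insEquiv K ↑t htK) with heR
    set eC : Fin (insert (↑t : Fin n) K).card ≃ (↥K ⊕ Unit) :=
      ((insert j K).orderIsoOfFin hcard).toEquiv.trans (insEquiv K j hjK) with heC
    have hfb : Matrix.fromBlocks MK Bm Ct Dt
        = (Matrix.of fun a b : Fin n => Sg n a b).submatrix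
            (Sum.elim (fun k : ↥K => (↑k : Fin n)) (fun _ => (↑t : Fin n)))
            (Sum.elim (fun k : ↥K => (↑k : Fin n)) (fun _ => j)) := by
      apply Matrix.ext
      intro p q
      rcases p with a | a <;> rcases q with b | b <;> rfl
    have hrowc : ∀ k, Sum.elim (fun k : ↥K => (↑k : Fin n)) (fun _ => (↑t : Fin n)) (eR k)
        = (insert (↑t : Fin n) K).orderEmbOfFin rfl k := by
      intro k
      rw [heR]
      have h1 := insEquiv_coe K (↑t : Fin n) htK
        (((insert (↑t : Fin n) K).orderIsoOfFin rfl).toEquiv k)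
      rw [Equiv.trans_apply, h1]
      exact Finset.coe_orderIsoOfFin_apply _ _ k
    have hcolc : ∀ l, Sum.elim (fun k : ↥K => (↑k : Fin n)) (fun _ => j) (eC l)
        = (insert j K).orderEmbOfFin hcard l := by
      intro l
      rw [heC]
      have h1 := insEquiv_coe K j hjK (((insert j K).orderIsoOfFin hcard).toEquiv l)
      rw [Equiv.trans_apply, h1]
      exact Finset.coe_orderIsoOfFin_apply _ _ l
    obtain ⟨u, hu2⟩ := det_submatrix_units
      ((Matrix.of fun a b : Fin n => Sg n a b).submatrix
          (Sum.elim (fun k : ↥K => (↑k : Fin n)) (fun _ => (↑t : Fin n)))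
          (Sum.elim (fun k : ↥K => (↑k : Fin n)) (fun _ => j))) eR eC
    have hfinal : locm n (fminor (genMat n) (insert (↑t : Fin n) K) (insert j K) hcard)
        = (u : Ss n) * (MK.det * cvec t) := by
      have hre : (Sum.elim (fun k : ↥K => (↑k : Fin n)) (fun _ => (↑t : Fin n))) ∘ ⇑eR
          = ⇑((insert (↑t : Fin n) K).orderEmbOfFin rfl) := funext hrowc
      have hce : (Sum.elim (fun k : ↥K => (↑k : Fin n)) (fun _ => j)) ∘ ⇑eC
          = ⇑((insert j K).orderEmbOfFin hcard) := funext hcolc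
      rw [hfm, ← hGt, hfb, ← hu2, Matrix.submatrix_submatrix, hre, hce]
    have hmem1 : (MK.det * cvec t) ∈ J := by
      have h3 : (MK.det * cvec t) = (↑u⁻¹ : Ss n)
          * locm n (fminor (genMat n) (insert (↑t : Fin n) K) (insert j K) hcard) := by
        rw [hfinal, ← mul_assoc]
        rw [Units.inv_mul]
        rw [one_mul]
      rw [h3]
      exact Ideal.mul_mem_left _ _ hgenJ
    obtain ⟨du, hdu⟩ := hMKdet
    have h4 : cvec t = (↑du⁻¹ : Ss n) * (MK.det * cvec t) := by
      rw [← hdu, ← mul_assoc, Units.inv_mul, one_mul]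
    rw [h4]
    exact Ideal.mul_mem_left _ _ hmem1
  -- the row identity split over K and T
  have hrow : ∀ r : Fin n, r < j → Sg n r j
      = (∑ m ∈ K, Sg n r m * lam n m j) + ∑ m ∈ T, Sg n r m * lam n m j := by
    intro r hr
    rw [← lam_spec n j r hr]
    rw [← Finset.sum_sdiff hKIio, ← hT, add_comm]
  have huK : uK = MK *ᵥ aK + NKT *ᵥ lamT := by
    funext k
    have hkj : (↑k : Fin n) < j := Finset.mem_Iio.mp (hKIio k.2)
    have h1 := hrow ↑k hkj
    show Sg n ↑k j = _
    rw [Pi.add_apply, h1]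
    congr 1
    · calc ∑ m ∈ K, Sg n ↑k m * lam n m j
          = ∑ m : ↥K, Sg n ↑k ↑m * lam n ↑m j :=
            (Finset.sum_coe_sort K (fun m => Sg n ↑k m * lam n m j)).symm
        _ = (MK *ᵥ aK) k := rfl
    · calc ∑ m ∈ T, Sg n ↑k m * lam n m j
          = ∑ m : ↥T, Sg n ↑k ↑m * lam n ↑m j :=
            (Finset.sum_coe_sort T (fun m => Sg n ↑k m * lam n m j)).symm
        _ = (NKT *ᵥ lamT) k := rfl
  have hMKinv : MK⁻¹ *ᵥ uK = aK + MK⁻¹ *ᵥ (NKT *ᵥ lamT) := by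
    rw [huK, Matrix.mulVec_add]
    congr 1
    rw [Matrix.mulVec_mulVec, Matrix.nonsing_inv_mul _ hMKdet, Matrix.one_mulVec]
  have hcvec : ∀ t : ↥T, cvec t = (Cm *ᵥ lamT) t := by
    intro t
    have htT : (↑t : Fin n) ∈ Finset.Iio j ∧ (↑t : Fin n) ∉ K := Finset.mem_sdiff.mp t.2
    have htj : (↑t : Fin n) < j := Finset.mem_Iio.mp htT.1
    have hrt := hrow ↑t htj
    have e1 : (fun k : ↥K => Sg n ↑t ↑k) ⬝ᵥ aK = ∑ m ∈ K, Sg n ↑t m * lam n m j := by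
      rw [dotProduct]
      exact Finset.sum_coe_sort K (fun m => Sg n ↑t m * lam n m j)
    have e2 : (Cm *ᵥ lamT) t = (∑ m ∈ T, Sg n ↑t m * lam n m j)
        - (fun k : ↥K => Sg n ↑t ↑k) ⬝ᵥ (MK⁻¹ *ᵥ (NKT *ᵥ lamT)) := by
      rw [hCm, Matrix.sub_mulVec, Pi.sub_apply]
      congr 1
      · calc (NTT *ᵥ lamT) t = ∑ m : ↥T, Sg n ↑t ↑m * lam n ↑m j := rfl
          _ = ∑ m ∈ T, Sg n ↑t m * lam n m j :=
            Finset.sum_coe_sort T (fun m => Sg n ↑t m * lam n m j)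
      · rw [← Matrix.mulVec_mulVec, ← Matrix.mulVec_mulVec]
        rfl
    show Sg n (↑t : Fin n) j - (fun k : ↥K => Sg n ↑t ↑k) ⬝ᵥ (MK⁻¹ *ᵥ uK) = (Cm *ᵥ lamT) t
    rw [e2, hrt, hMKinv, dotProduct_add, e1]
    ring
  have hlamvec : lamT = Cm⁻¹ *ᵥ cvec := by
    have h1 : cvec = Cm *ᵥ lamT := funext hcvec
    rw [h1, Matrix.mulVec_mulVec, Matrix.nonsing_inv_mul _ hCmdet, Matrix.one_mulVec]
  have hfin : lam n i j = ∑ s : ↥T, Cm⁻¹ ⟨i, hiT⟩ s * cvec s := by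
    have h1 : lam n i j = lamT ⟨i, hiT⟩ := rfl
    rw [h1, hlamvec]
    rfl
  rw [hfin]
  apply Ideal.sum_mem
  intro s _
  exact Ideal.mul_mem_left _ _ (hcvecJ s)
/-! ### the saturated ideal is the kernel of the parametrization -/

lemma mem_satIdeal {R' : Type*} [CommRing R'] (I : Ideal R') (g : R') (f : R') :
    f ∈ satIdeal I g ↔ ∃ m : ℕ, g ^ m * f ∈ I := Iff.rfl

lemma satPG_eq_ker (E : Fin n → Fin n → Prop) [DecidableRel E]
    (hE : ∀ i j, E i j → i < j) (hn : 1 ≤ n) :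
    satPG E = RingHom.ker (phiG n E) := by
  apply le_antisymm
  · intro f hf
    obtain ⟨m, hm⟩ := (mem_satIdeal _ _ _).mp hf
    have h1 : phiG n E (theta0 n ^ m * f) = 0 := impIdeal_le_ker n E hE hm
    rw [RingHom.map_mul, RingHom.map_pow] at h1
    rw [RingHom.mem_ker]
    rcases mul_eq_zero.mp h1 with h2 | h2
    · exact absurd h2 (pow_ne_zero m (phiG_theta_ne n E hn))
    · exact h2
  · intro f hf
    have hker : phiG n E f = 0 := RingHom.mem_ker.mp hf
    set J := Ideal.map (locm n) (impIdeal E) with hJ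
    set q := Ideal.Quotient.mk J with hq
    have hhom : (q.comp (psi n)).comp (rho n E) = q.comp (psi n) := by
      apply MvPolynomial.ringHom_ext
      · intro c
        simp only [RingHom.comp_apply]
        congr 1
        unfold rho
        rw [eval₂Hom_C]
      · intro v
        rcases v with p | i
        · obtain ⟨a, b⟩ := p
          simp only [RingHom.comp_apply]
          rw [rho_inl]
          by_cases hab : E a b
          · rw [if_pos hab]
          · rw [if_neg hab, map_zero, map_zero, psi_inl]
            by_cases hlt : a < b
            · symm
              rw [hq, Ideal.Quotient.eq_zero_iff_mem]
              exact lam_mem n E hE a b hlt hab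
            · rw [lam_eq_zero n hlt, map_zero]
        · simp only [RingHom.comp_apply]
          rw [rho_inr]
    have h2 : q (locm n f) = 0 := by
      have h3 : locm n f = psi n (phi n f) := by
        rw [← RingHom.comp_apply, psi_comp_phi]
      have h4 : q (psi n (phi n f)) = q (psi n (rho n E (phi n f))) :=
        (RingHom.congr_fun hhom (phi n f)).symm
      have h5 : rho n E (phi n f) = phiG n E f := rfl
      rw [h3, h4, h5, hker, map_zero, map_zero]
    have h6 : locm n f ∈ J := by
      rw [hq, Ideal.Quotient.eq_zero_iff_mem] at h2
      exact h2
    rw [hJ] at h6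
    have h7 := (IsLocalization.mem_map_algebraMap_iff
      (Submonoid.powers (theta0 n)) (Ss n)).mp h6
    obtain ⟨⟨⟨a, haI⟩, ⟨s, hs⟩⟩, heq⟩ := h7
    obtain ⟨m, hm⟩ := hs
    have h8 : locm n (theta0 n ^ m * f) = locm n a := by
      have h8a : locm n f * locm n s = locm n a := heq
      have hm' : theta0 n ^ m = s := hm
      rw [← h8a, ← hm', RingHom.map_mul, mul_comm]
    have h9 : theta0 n ^ m * f = a := locm_inj n h8
    exact (mem_satIdeal _ _ _).mpr ⟨m, h9 ▸ haI⟩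

lemma satPG_isPrime (E : Fin n → Fin n → Prop) [DecidableRel E]
    (hE : ∀ i j, E i j → i < j) (hn : 1 ≤ n) : (satPG E).IsPrime := by
  rw [satPG_eq_ker n E hE hn]
  exact RingHom.ker_isPrime _
variable {n : ℕ}


def Φ (s : Equiv.Perm (Fin n)) : Rr n →+* Rr n :=
  (MvPolynomial.rename (Sym2.map ⇑s)).toRingHom

lemma Φ_apply (s : Equiv.Perm (Fin n)) (f : Rr n) : Φ s f = rename (Sym2.map ⇑s) f := rfl

lemma Φ_comp_apply (s t : Equiv.Perm (Fin n)) (f : Rr n) : Φ s (Φ t f) = Φ (s * t) f := by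
  simp only [Φ_apply, rename_rename]
  congr 1
  rw [← Sym2.map_comp]
  rfl

lemma Φ_one (f : Rr n) : Φ (1 : Equiv.Perm (Fin n)) f = f := by
  simp only [Φ_apply]
  have : Sym2.map (⇑(1 : Equiv.Perm (Fin n))) = _root_.id := by
    rw [Equiv.Perm.coe_one, Sym2.map_id]
  rw [this]
  exact congrArg (fun g => g f) rename_id

lemma Φ_one_eq : (Φ (1 : Equiv.Perm (Fin n))) = RingHom.id (Rr n) :=
  RingHom.ext Φ_one

lemma Φ_comp (s t : Equiv.Perm (Fin n)) : (Φ s).comp (Φ t) = Φ (s * t) :=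
  RingHom.ext (Φ_comp_apply s t)

lemma comap_Φ_comap_Φ (s t : Equiv.Perm (Fin n)) (I : Ideal (Rr n)) :
    Ideal.comap (Φ s) (Ideal.comap (Φ t) I) = Ideal.comap (Φ (t * s)) I := by
  rw [Ideal.comap_comap, Φ_comp]

lemma Φ_surjective (s : Equiv.Perm (Fin n)) : Function.Surjective (Φ s) := by
  intro x
  exact ⟨Φ s⁻¹ x, by rw [Φ_comp_apply, mul_inv_cancel, Φ_one]⟩

lemma map_Φ_eq_comap (s : Equiv.Perm (Fin n)) (I : Ideal (Rr n)) :
    Ideal.map (Φ s) I = Ideal.comap (Φ s⁻¹) I := by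
  apply le_antisymm
  · rw [Ideal.map_le_iff_le_comap]
    intro x hx
    show Φ s⁻¹ (Φ s x) ∈ I
    rw [Φ_comp_apply, inv_mul_cancel, Φ_one]
    exact hx
  · intro x hx
    have hx' : Φ s⁻¹ x ∈ I := hx
    have : x = Φ s (Φ s⁻¹ x) := by rw [Φ_comp_apply, mul_inv_cancel, Φ_one]
    rw [this]
    exact Ideal.mem_map_of_mem _ hx'

lemma mem_map_Φ {s : Equiv.Perm (Fin n)} {I : Ideal (Rr n)} {f : Rr n} :
    f ∈ Ideal.map (Φ s) I ↔ Φ s⁻¹ f ∈ I := by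
  rw [map_Φ_eq_comap]; rfl

lemma cover (P Q : Ideal (Rr n)) (hQ : Q.IsPrime)
    (h1 : ∀ f : Rr n, (∀ s : Equiv.Perm (Fin n), rename (Sym2.map ⇑s) f = f) →
      f ∈ P → f ∈ Q) :
    ∃ s : Equiv.Perm (Fin n), P ≤ Ideal.comap (Φ s) Q := by
  have key : ∀ f ∈ P, ∃ s : Equiv.Perm (Fin n), f ∈ Ideal.comap (Φ s) Q := by
    intro f hf
    set N := ∏ s : Equiv.Perm (Fin n), Φ s f with hN
    have hNinv : ∀ t : Equiv.Perm (Fin n), rename (Sym2.map ⇑t) N = N := by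
      intro t
      have h2 : rename (Sym2.map ⇑t) N = ∏ s : Equiv.Perm (Fin n), Φ t (Φ s f) := by
        rw [← Φ_apply, hN, map_prod]
      rw [h2]
      have h3 : ∀ s : Equiv.Perm (Fin n), Φ t (Φ s f) = Φ (t * s) f := fun s => Φ_comp_apply t s f
      simp only [h3]
      exact Equiv.prod_comp (Equiv.mulLeft t) (fun s => Φ s f)
    have hNP : N ∈ P := by
      have h4 := Finset.mul_prod_erase Finset.univ (fun s : Equiv.Perm (Fin n) => Φ s f)
        (Finset.mem_univ 1)
      rw [hN, ← h4]
      exact Ideal.mul_mem_right _ _ (by show Φ 1 f ∈ P; rw [Φ_one]; exact hf)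
    have hNQ : N ∈ Q := h1 N hNinv hNP
    have := (Ideal.IsPrime.prod_mem_iff (hp := hQ)).mp hNQ
    obtain ⟨s, -, hs⟩ := this
    exact ⟨s, hs⟩
  have hsub : (P : Set (Rr n)) ⊆ ⋃ s ∈ (Finset.univ : Finset (Equiv.Perm (Fin n))),
      ((Ideal.comap (Φ s) Q : Ideal (Rr n)) : Set (Rr n)) := by
    intro x hx
    obtain ⟨s, hs⟩ := key x hx
    exact Set.mem_biUnion (Finset.mem_coe.mpr (Finset.mem_univ s)) hs
  have hp : ∀ s ∈ (Finset.univ : Finset (Equiv.Perm (Fin n))), s ≠ 1 → s ≠ 1 →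
      (Ideal.comap (Φ s) Q).IsPrime := fun s _ _ _ => Ideal.IsPrime.comap _
  obtain ⟨s, -, hs⟩ := (Ideal.subset_union_prime (1 : Equiv.Perm (Fin n)) 1 hp).mp hsub
  exact ⟨s, hs⟩

theorem orbit_lemma (P Q : Ideal (Rr n)) (hP : P.IsPrime) (hQ : Q.IsPrime)
    (h : ∀ f : Rr n, (∀ s : Equiv.Perm (Fin n), rename (Sym2.map ⇑s) f = f) →
      (f ∈ P ↔ f ∈ Q)) :
    ∃ s : Equiv.Perm (Fin n), Ideal.map (Φ s) P = Q := by
  obtain ⟨s, hs⟩ := cover P Q hQ (fun f hf hfP => (h f hf).mp hfP)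
  obtain ⟨t, ht⟩ := cover Q P hP (fun f hf hfQ => (h f hf).mpr hfQ)
  set k := t * s with hk
  have hchain : P ≤ Ideal.comap (Φ k) P := by
    refine le_trans hs ?_
    have : Ideal.comap (Φ s) Q ≤ Ideal.comap (Φ s) (Ideal.comap (Φ t) P) :=
      Ideal.comap_mono ht
    rwa [comap_Φ_comap_Φ] at this
  have hpow : ∀ m : ℕ, P ≤ Ideal.comap (Φ (k ^ m)) P := by
    intro m
    induction m with
    | zero => rw [pow_zero, Φ_one_eq, Ideal.comap_id]
    | succ m ih =>
      refine le_trans hchain ?_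
      have := Ideal.comap_mono (f := Φ k) ih
      rwa [comap_Φ_comap_Φ, ← pow_succ] at this
  have hord : 0 < orderOf k := orderOf_pos k
  have hrev : Ideal.comap (Φ k) P ≤ P := by
    have h2 := hpow (orderOf k - 1)
    have h3 := Ideal.comap_mono (f := Φ k) h2
    rw [comap_Φ_comap_Φ, ← pow_succ, Nat.sub_add_cancel hord, pow_orderOf_eq_one,
      Φ_one_eq, Ideal.comap_id] at h3
    exact h3
  have hPQ : P = Ideal.comap (Φ s) Q := by
    refine le_antisymm hs ?_
    have : Ideal.comap (Φ s) Q ≤ Ideal.comap (Φ s) (Ideal.comap (Φ t) P) :=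
      Ideal.comap_mono ht
    rw [comap_Φ_comap_Φ] at this
    exact le_trans this hrev
  refine ⟨s, ?_⟩
  rw [hPQ, Ideal.map_comap_of_surjective (Φ s) (Φ_surjective s)]


end Prim

open Prim in
/-- Theorem 4 of the paper (algebraic isomorphism criterion): there is a permutation of the
nodes carrying `p_G` onto `p_{G'}` if and only if `p_G` and `p_{G'}` have the same intersection
with the subring of permutation-invariant polynomials. -/
theorem exists_perm_map_satPG_iff_invariant {n : ℕ} (hn : 1 ≤ n)
    (E : Fin n → Fin n → Prop) [DecidableRel E] (hE : ∀ i j, E i j → i < j)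
    (E' : Fin n → Fin n → Prop) [DecidableRel E'] (hE' : ∀ i j, E' i j → i < j) :
    (∃ s : Equiv.Perm (Fin n),
        Ideal.map (MvPolynomial.rename (Sym2.map ⇑s)).toRingHom (satPG E) = satPG E') ↔
      ∀ f : MvPolynomial (Sym2 (Fin n)) ℂ,
        (∀ s : Equiv.Perm (Fin n), MvPolynomial.rename (Sym2.map ⇑s) f = f) →
        (f ∈ satPG E ↔ f ∈ satPG E') := by
  constructor
  · rintro ⟨s, hs⟩ f hf
    rw [← hs]
    show f ∈ satPG E ↔ f ∈ Ideal.map (Prim.Φ s) (satPG E)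
    rw [Prim.mem_map_Φ, Prim.Φ_apply, hf s⁻¹]
  · intro h
    obtain ⟨s, hs⟩ := Prim.orbit_lemma (satPG E) (satPG E')
      (Prim.satPG_isPrime n E hE hn) (Prim.satPG_isPrime n E' hE' hn) h
    exact ⟨s, hs⟩
end
end

section
/- Let G and G' be topologically sorted DAGs on the same node set Fin n. Then p_G = p_{G'} if and only if loc(G) ∩ {positive definite matrices} = loc(G') ∩ {positive definite matrices}; that is, the saturated ideals coincide exactly when the two models admit the same non-singular Gaussian covariance matrices. -/
open MvPolynomial Matrix

noncomputable section

/-- The rank of the submatrix of `σ` with rows `A` and columns `B`. -/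
def subRank {n : ℕ} (σ : Matrix (Fin n) (Fin n) ℝ) (A B : Finset (Fin n)) : ℕ :=
  (σ.submatrix (fun a : A => (a : Fin n)) (fun b : B => (b : Fin n))).rank

/-- `loc(G)`: positive semidefinite matrices satisfying the rank conditions of the local
Markov relations of the DAG `G`. -/
def locSet {n : ℕ} (E : Fin n → Fin n → Prop) [DecidableRel E] :
    Set (Matrix (Fin n) (Fin n) ℝ) :=
  {σ | σ.PosSemidef ∧ ∀ i j : Fin n, i < j → ¬ E i j →
    subRank σ (insert i (parents E j)) (insert j (parents E j)) =
      subRank σ (parents E j) (parents E j)}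



-- general rank lemmas
section Rank
variable {F : Type*} [Field F]

lemma rank_submatrix_le'' {m₁ n₁ m₂ n₂ : Type*} [Fintype m₁] [Fintype n₁] [Fintype m₂]
    [Fintype n₂] [DecidableEq m₁] [DecidableEq n₁]
    (A : Matrix m₁ n₁ F) (f : m₂ → m₁) (g : n₂ → n₁) :
    (A.submatrix f g).rank ≤ A.rank := by
  classical
  set P : Matrix m₂ m₁ F := Matrix.of fun x y => if f x = y then 1 else 0 with hP
  set Q : Matrix n₁ n₂ F := Matrix.of fun y x => if g x = y then 1 else 0 with hQ
  have hfact : A.submatrix f g = P * (A * Q) := by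
    ext x y
    simp only [Matrix.mul_apply, hP, hQ, Matrix.of_apply, Matrix.submatrix_apply]
    rw [Finset.sum_eq_single (f x)]
    · simp only [if_pos rfl, one_mul]
      rw [Finset.sum_eq_single (g y)]
      · simp
      · intro b _ hb; rw [if_neg (by exact fun h => hb h.symm), mul_zero]
      · simp
    · intro b _ hb; rw [if_neg (by exact fun h => hb h.symm), zero_mul]
    · simp
  rw [hfact]
  exact le_trans (Matrix.rank_mul_le_right P (A * Q)) (Matrix.rank_mul_le_left A Q)

lemma rank_submatrix_eq'' {m₁ n₁ m₂ n₂ : Type*} [Fintype m₁] [Fintype n₁] [Fintype m₂]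
    [Fintype n₂] [DecidableEq m₁] [DecidableEq n₁] [DecidableEq m₂] [DecidableEq n₂]
    (A : Matrix m₁ n₁ F) (e : m₂ ≃ m₁) (e' : n₂ ≃ n₁) :
    (A.submatrix e e').rank = A.rank := by
  refine le_antisymm (rank_submatrix_le'' A e e') ?_
  have : A = (A.submatrix e e').submatrix e.symm e'.symm := by
    ext x y; simp
  conv_lhs => rw [this]
  exact rank_submatrix_le'' _ _ _

lemma rank_lt_card_of_det_eq_zero {m : Type*} [Fintype m] [DecidableEq m]
    {A : Matrix m m F} (h : A.det = 0) : A.rank < Fintype.card m := by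
  obtain ⟨v, hv, hAv⟩ := (Matrix.exists_mulVec_eq_zero_iff).mpr h
  have hker : 0 < Module.finrank F (LinearMap.ker A.mulVecLin) := by
    rw [Module.finrank_pos_iff]
    exact ⟨⟨⟨v, by simpa [Matrix.mulVecLin] using hAv⟩, 0, by simpa using hv⟩⟩
  have hrn := LinearMap.finrank_range_add_finrank_ker A.mulVecLin
  have hcard : Module.finrank F (m → F) = Fintype.card m := Module.finrank_pi F
  rw [hcard] at hrn
  have : A.rank = Module.finrank F (LinearMap.range A.mulVecLin) := rfl
  omega

lemma rank_eq_card_of_det_ne_zero {m : Type*} [Fintype m] [DecidableEq m]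
    {A : Matrix m m F} (h : A.det ≠ 0) : A.rank = Fintype.card m :=
  Matrix.rank_of_isUnit A ((Matrix.isUnit_iff_isUnit_det A).mpr (isUnit_iff_ne_zero.mpr h))

end Rank

section SMat
variable {n : ℕ} {F : Type*} [Field F]

/-- The witness matrix: identity plus `ε` in the symmetric positions `(i,j)` and `(j,i)`. -/
def sMat (ε : F) (i j : Fin n) : Matrix (Fin n) (Fin n) F :=
  Matrix.of fun a b =>
    (if a = b then (1 : F) else 0) + (if s(a, b) = s(i, j) then ε else 0)

lemma sMat_apply (ε : F) (i j a b : Fin n) :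
    sMat ε i j a b =
      (if a = b then (1 : F) else 0) + (if (a = i ∧ b = j) ∨ (a = j ∧ b = i) then ε else 0) := by
  simp only [sMat, Matrix.of_apply, Sym2.eq_iff]

lemma det_minor_sMat_ne_zero {ε : F} (hε : ε ≠ 0) {i j : Fin n} (hij : i < j)
    {K : Finset (Fin n)} (hKj : ∀ k ∈ K, k < j) (hiK : i ∉ K)
    (hcard : (insert j K).card = (insert i K).card) :
    Matrix.det (Matrix.of fun k l : Fin (insert i K).card =>
      sMat ε i j ((insert i K).orderEmbOfFin rfl k) ((insert j K).orderEmbOfFin hcard l)) ≠ 0 := by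
  classical
  set m := (insert i K).card with hm
  set eR := (insert i K).orderIsoOfFin (rfl : (insert i K).card = m) with heR
  set eC := (insert j K).orderIsoOfFin hcard with heC
  have hjmem : j ∈ insert j K := Finset.mem_insert_self _ _
  set g : {x // x ∈ insert i K} → {x // x ∈ insert j K} := fun x =>
    if h : (x : Fin n) = i then ⟨j, hjmem⟩
    else ⟨(x : Fin n), by
      rcases Finset.mem_insert.mp x.2 with h' | h'
      · exact absurd h' h
      · exact Finset.mem_insert_of_mem h'⟩ with hg
  have hKlt : ∀ x : {x // x ∈ insert i K}, (x : Fin n) ≠ i → (x : Fin n) < j := by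
    intro x hx
    rcases Finset.mem_insert.mp x.2 with h' | h'
    · exact absurd h' hx
    · exact hKj _ h'
  have hginj : Function.Injective g := by
    intro x y hxy
    by_cases hx : (x : Fin n) = i <;> by_cases hy : (y : Fin n) = i
    · exact Subtype.ext (hx.trans hy.symm)
    · exfalso
      rw [hg] at hxy
      simp only [dif_pos hx, dif_neg hy, Subtype.mk.injEq] at hxy
      exact absurd hxy.symm (hKlt y hy).ne
    · exfalso
      rw [hg] at hxy
      simp only [dif_pos hy, dif_neg hx, Subtype.mk.injEq] at hxy
      exact absurd hxy (hKlt x hx).ne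
    · rw [hg] at hxy
      simp only [dif_neg hx, dif_neg hy, Subtype.mk.injEq] at hxy
      exact Subtype.ext hxy
  have hgbij : Function.Bijective g := by
    rw [Fintype.bijective_iff_injective_and_card]
    refine ⟨hginj, ?_⟩
    rw [Fintype.card_coe, Fintype.card_coe]
    exact hcard.symm
  set π : Equiv.Perm (Fin m) :=
    (eR.toEquiv.trans ((Equiv.ofBijective g hgbij).trans eC.toEquiv.symm)) with hπ
  set w : Fin m → F := fun k => if ((eR k : {x // x ∈ insert i K}) : Fin n) = i then ε else 1
    with hw
  have hrj : ∀ k : Fin m, ((eR k : {x // x ∈ insert i K}) : Fin n) ≠ j := by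
    intro k
    by_cases h : ((eR k : {x // x ∈ insert i K}) : Fin n) = i
    · rw [h]; exact hij.ne
    · exact (hKlt _ h).ne
  have hci : ∀ l : Fin m, ((eC l : {x // x ∈ insert j K}) : Fin n) ≠ i := by
    intro l h
    have h2 := (eC l).2
    rw [h] at h2
    rcases Finset.mem_insert.mp h2 with h' | h'
    · exact hij.ne h'
    · exact hiK h'
  have key : (Matrix.of fun k l : Fin (insert i K).card =>
      sMat ε i j ((insert i K).orderEmbOfFin rfl k) ((insert j K).orderEmbOfFin hcard l)) =
      Matrix.diagonal w * π.permMatrix F := by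
    ext k l
    rw [Matrix.diagonal_mul]
    have hL : ((insert i K).orderEmbOfFin rfl k : Fin n)
        = ((eR k : {x // x ∈ insert i K}) : Fin n) := by
      rw [heR, Finset.coe_orderIsoOfFin_apply]
    have hC : ((insert j K).orderEmbOfFin hcard l : Fin n)
        = ((eC l : {x // x ∈ insert j K}) : Fin n) := by
      rw [heC, Finset.coe_orderIsoOfFin_apply]
    have hperm : π.permMatrix F k l = if l = π k then (1 : F) else 0 := by
      simp only [Equiv.Perm.permMatrix, PEquiv.toMatrix_apply, Equiv.toPEquiv_apply,
        Option.mem_some_iff]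
      congr 1
      exact propext eq_comm
    rw [Matrix.of_apply, hL, hC, hperm]
    by_cases hl : l = π k
    · have hcl : (eC l : {x // x ∈ insert j K}) = g (eR k) := by
        rw [hl, hπ]
        simp
      by_cases hri : ((eR k : {x // x ∈ insert i K}) : Fin n) = i
      · have hcj : ((eC l : {x // x ∈ insert j K}) : Fin n) = j := by
          rw [hcl, hg]
          simp [dif_pos hri]
        have hwk : w k = ε := by rw [hw]; simp [hri]
        rw [sMat_apply, if_pos hl, hwk, hri, hcj, mul_one]
        simp [hij.ne]
      · have hcr : ((eC l : {x // x ∈ insert j K}) : Fin n)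
            = ((eR k : {x // x ∈ insert i K}) : Fin n) := by
          rw [hcl, hg]
          simp [dif_neg hri]
        have hwk : w k = 1 := by rw [hw]; simp [hri]
        rw [sMat_apply, if_pos hl, hwk, hcr, mul_one]
        simp [hri, hrj k]
    · have h1 : (eC l : {x // x ∈ insert j K}) ≠ g (eR k) := by
        intro h
        apply hl
        have := congrArg eC.toEquiv.symm h
        simpa [hπ] using this
      rw [sMat_apply, if_neg hl, mul_zero]
      by_cases hri : ((eR k : {x // x ∈ insert i K}) : Fin n) = i
      · have hcj : ((eC l : {x // x ∈ insert j K}) : Fin n) ≠ j := by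
          intro h
          apply h1
          apply Subtype.ext
          rw [h, hg]
          simp [dif_pos hri]
        have hic : ¬ (i = ((eC l : {x // x ∈ insert j K}) : Fin n)) := fun h => hci l h.symm
        rw [hri]
        simp [hic, hcj, hij.ne]
      · have hcr : ((eC l : {x // x ∈ insert j K}) : Fin n)
            ≠ ((eR k : {x // x ∈ insert i K}) : Fin n) := by
          intro h
          apply h1
          apply Subtype.ext
          rw [h, hg]
          simp [dif_neg hri]
        have hrc : ¬ (((eR k : {x // x ∈ insert i K}) : Fin n)
            = ((eC l : {x // x ∈ insert j K}) : Fin n)) := fun h => hcr h.symm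
        simp [hrc, hri, hrj k]
  rw [key, Matrix.det_mul, Matrix.det_diagonal, Matrix.det_permutation]
  apply mul_ne_zero
  · rw [Finset.prod_ne_zero_iff]
    intro k _
    by_cases h : ((eR k : {x // x ∈ insert i K}) : Fin n) = i <;> simp [hw, h, hε]
  · rcases Int.units_eq_one_or (Equiv.Perm.sign π) with h | h <;> rw [h] <;> simp



lemma det_minor_sMat_eq_zero (ε : F) {i j a b : Fin n} (hij : i < j) (hab : a < b)
    (hne : ¬(a = i ∧ b = j)) {K : Finset (Fin n)} (hKb : ∀ k ∈ K, k < b)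
    (hcard : (insert b K).card = (insert a K).card) :
    Matrix.det (Matrix.of fun k l : Fin (insert a K).card =>
      sMat ε i j ((insert a K).orderEmbOfFin rfl k) ((insert b K).orderEmbOfFin hcard l)) = 0 := by
  classical
  set m := (insert a K).card with hm
  set M : Matrix (Fin m) (Fin m) F := Matrix.of fun k l : Fin (insert a K).card =>
      sMat ε i j ((insert a K).orderEmbOfFin rfl k) ((insert b K).orderEmbOfFin hcard l) with hM
  set eC := (insert b K).orderIsoOfFin hcard with heC
  have hCval : ∀ l : Fin m, ((insert b K).orderEmbOfFin hcard l : Fin n)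
      = ((eC l : {x // x ∈ insert b K}) : Fin n) := by
    intro l; rw [heC, Finset.coe_orderIsoOfFin_apply]
  have hrmem : ∀ k : Fin m, ((insert a K).orderEmbOfFin rfl k : Fin n) ∈ insert a K :=
    fun k => Finset.orderEmbOfFin_mem _ _ _
  have hrb : ∀ k : Fin m, ((insert a K).orderEmbOfFin rfl k : Fin n) < b := by
    intro k
    rcases Finset.mem_insert.mp (hrmem k) with h | h
    · rw [h]; exact hab
    · exact hKb _ h
  by_cases hbj : b = j
  · subst hbj
    have hai : a ≠ i := fun h => hne ⟨h, rfl⟩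
    by_cases hiK : i ∈ K
    · -- column at `j` is `ε` times column at `i`
      set l0 : Fin m := eC.symm ⟨b, Finset.mem_insert_self _ _⟩ with hl0
      set l1 : Fin m := eC.symm ⟨i, Finset.mem_insert_of_mem hiK⟩ with hl1
      have hv0 : ((eC l0 : {x // x ∈ insert b K}) : Fin n) = b := by
        rw [hl0, OrderIso.apply_symm_apply]
      have hv1 : ((eC l1 : {x // x ∈ insert b K}) : Fin n) = i := by
        rw [hl1, OrderIso.apply_symm_apply]
      have hl01 : l1 ≠ l0 := by
        intro h
        rw [h] at hv1
        rw [hv0] at hv1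
        exact hij.ne' hv1
      have hcol : ∀ k, M k l0 = ε * M k l1 := by
        intro k
        rw [hM]
        simp only [Matrix.of_apply]
        rw [hCval l0, hCval l1, hv0, hv1, sMat_apply, sMat_apply]
        have hr := hrb k
        set r := ((insert a K).orderEmbOfFin rfl k : Fin n) with hrdef
        have hrj : r ≠ b := hr.ne
        by_cases hri : r = i
        · rw [if_neg (by rw [hri]; exact hij.ne), if_pos (Or.inl ⟨hri, rfl⟩),
            if_pos hri, if_neg (by rintro (⟨_, h⟩ | ⟨h, _⟩); exact hij.ne h; exact hrj h)]
          ring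
        · rw [if_neg hrj, if_neg (by rintro (⟨h, _⟩ | ⟨h, _⟩); exact hri h; exact hrj h),
            if_neg hri, if_neg (by rintro (⟨h, _⟩ | ⟨h, _⟩); exact hri h; exact hrj h)]
          ring
      have hfun : (fun k => M k l0) = (ε • fun k => M k l1) := by
        funext k
        simp only [Pi.smul_apply, smul_eq_mul]
        exact hcol k
      have step1 : M = M.updateCol l0 (ε • fun k => M k l1) := by
        conv_lhs => rw [← Matrix.updateCol_eq_self M l0, hfun]
      rw [step1, Matrix.det_updateCol_smul]
      rw [Matrix.det_updateCol_eq_zero hl01]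
      ring
    · -- column at `j` vanishes
      set l0 : Fin m := eC.symm ⟨b, Finset.mem_insert_self _ _⟩ with hl0
      have hv0 : ((eC l0 : {x // x ∈ insert b K}) : Fin n) = b := by
        rw [hl0, OrderIso.apply_symm_apply]
      apply Matrix.det_eq_zero_of_column_eq_zero l0
      intro k
      rw [hM]
      simp only [Matrix.of_apply]
      rw [hCval l0, hv0, sMat_apply]
      have hr := hrb k
      have hria : ((insert a K).orderEmbOfFin rfl k : Fin n) ≠ i := by
        intro h
        rcases Finset.mem_insert.mp (hrmem k) with h' | h'
        · rw [h] at h'; exact hai h'.symm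
        · rw [h] at h'; exact hiK h'
      rw [if_neg hr.ne, if_neg (by rintro (⟨h, _⟩ | ⟨h, _⟩); exact hria h; exact hr.ne h)]
      ring
  · -- column at `b` vanishes
    set l0 : Fin m := eC.symm ⟨b, Finset.mem_insert_self _ _⟩ with hl0
    have hv0 : ((eC l0 : {x // x ∈ insert b K}) : Fin n) = b := by
      rw [hl0, OrderIso.apply_symm_apply]
    apply Matrix.det_eq_zero_of_column_eq_zero l0
    intro k
    rw [hM]
    simp only [Matrix.of_apply]
    rw [hCval l0, hv0, sMat_apply]
    have hr := hrb k
    rw [if_neg hr.ne, if_neg ?_]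
    · ring
    · rintro (⟨_, h⟩ | ⟨h1, h2⟩)
      · exact hbj h
      · rw [h2] at hr
        rw [h1] at hr
        exact absurd hij (not_lt.mpr hr.le)

lemma sMat_symm (ε : F) (i j a b : Fin n) : sMat ε i j a b = sMat ε i j b a := by
  by_cases h : a = b
  · subst h; rfl
  · simp only [sMat, Matrix.of_apply]
    congr 1
    · rw [if_neg h, if_neg (fun hh => h hh.symm)]
    · rw [show s(a, b) = s(b, a) from Sym2.eq_swap]

end SMat

section PD

variable {n : ℕ}

lemma posDef_submatrix_inj {m' : Type*} [Fintype m'] [DecidableEq m']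
    {M : Matrix (Fin n) (Fin n) ℝ} (hM : M.PosDef) {f : m' → Fin n}
    (hf : Function.Injective f) : (M.submatrix f f).PosDef := by
  classical
  refine Matrix.PosDef.of_dotProduct_mulVec_pos (hM.1.submatrix f) ?_
  intro x hx
  set y : Fin n → ℝ := fun b => ∑ a, if f a = b then x a else 0 with hy
  have hyf : ∀ a, y (f a) = x a := by
    intro a
    show (∑ a' : m', if f a' = f a then x a' else 0) = x a
    rw [Finset.sum_eq_single a]
    · rw [if_pos rfl]
    · intro a' _ ha'
      rw [if_neg (fun h => ha' (hf h))]
    · intro h; exact absurd (Finset.mem_univ a) h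
  have hy0 : y ≠ 0 := by
    obtain ⟨a, ha⟩ := Function.ne_iff.mp hx
    intro h
    apply ha
    have := hyf a
    rw [h] at this
    simpa using this.symm
  have hdot1 : ∀ z : Fin n → ℝ, (∑ b, y b * z b) = ∑ a, x a * z (f a) := by
    intro z
    simp only [hy, Finset.sum_mul, ite_mul, zero_mul]
    rw [Finset.sum_comm]
    refine Finset.sum_congr rfl fun a _ => ?_
    rw [Finset.sum_ite_eq]
    simp
  have hdot2 : ∀ z : Fin n → ℝ, (∑ b, z b * y b) = ∑ a, z (f a) * x a := by
    intro z
    simp only [hy, Finset.mul_sum, mul_ite, mul_zero]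
    rw [Finset.sum_comm]
    refine Finset.sum_congr rfl fun a _ => ?_
    rw [Finset.sum_ite_eq]
    simp
  have hquad : dotProduct (star x) ((M.submatrix f f) *ᵥ x)
      = dotProduct (star y) (M *ᵥ y) := by
    simp only [star_trivial, Matrix.mulVec, dotProduct, Matrix.submatrix_apply]
    rw [hdot1 (fun b => ∑ b', M b b' * y b')]
    refine Finset.sum_congr rfl fun a _ => ?_
    rw [hdot2 (fun b' => M (f a) b')]
  rw [hquad]
  exact hM.dotProduct_mulVec_pos hy0

lemma sMat_posDef {i j : Fin n} (hij : i < j) : (sMat (2⁻¹ : ℝ) i j).PosDef := by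
  classical
  refine Matrix.PosDef.of_dotProduct_mulVec_pos ?_ ?_
  · ext a b
    rw [Matrix.conjTranspose_apply, star_trivial]
    exact sMat_symm _ i j b a
  · intro x hx
    have inner : ∀ a, (sMat (2⁻¹ : ℝ) i j *ᵥ x) a
        = x a + ((if a = i then 2⁻¹ * x j else 0) + (if a = j then 2⁻¹ * x i else 0)) := by
      intro a
      show (∑ b, sMat (2⁻¹ : ℝ) i j a b * x b) = _
      have expand : ∀ b, sMat (2⁻¹ : ℝ) i j a b * x b
          = (if a = b then x b else 0)
            + (if (a = i ∧ b = j) ∨ (a = j ∧ b = i) then 2⁻¹ * x b else 0) := by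
        intro b
        rw [sMat_apply, add_mul, ite_mul, ite_mul, zero_mul, one_mul]
      rw [Finset.sum_congr rfl fun b _ => expand b, Finset.sum_add_distrib]
      congr 1
      · rw [Finset.sum_ite_eq Finset.univ a x]
        simp
      · by_cases hai : a = i
        · have hcond : ∀ b : Fin n, ((a = i ∧ b = j) ∨ (a = j ∧ b = i)) ↔ b = j := by
            intro b
            constructor
            · rintro (⟨_, h⟩ | ⟨h, _⟩)
              · exact h
              · exact absurd (hai.symm.trans h) hij.ne
            · intro h; exact Or.inl ⟨hai, h⟩
          rw [Finset.sum_congr rfl fun b _ => if_congr (hcond b) rfl rfl,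
            Finset.sum_ite_eq' Finset.univ j (fun b => 2⁻¹ * x b)]
          have haj : a ≠ j := fun h => hij.ne (hai.symm.trans h)
          simp [hai, haj, hij.ne]
        · by_cases haj : a = j
          · have hcond : ∀ b : Fin n, ((a = i ∧ b = j) ∨ (a = j ∧ b = i)) ↔ b = i := by
              intro b
              constructor
              · rintro (⟨h, _⟩ | ⟨_, h⟩)
                · exact absurd h hai
                · exact h
              · intro h; exact Or.inr ⟨haj, h⟩
            rw [Finset.sum_congr rfl fun b _ => if_congr (hcond b) rfl rfl,
              Finset.sum_ite_eq' Finset.univ i (fun b => 2⁻¹ * x b)]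
            simp [haj, hai, hij.ne']
          · have hcond : ∀ b : Fin n, ¬((a = i ∧ b = j) ∨ (a = j ∧ b = i)) := by
              rintro b (⟨h, _⟩ | ⟨h, _⟩)
              · exact hai h
              · exact haj h
            simp [hai, haj, hcond]
    have hsum : dotProduct (star x) (sMat (2⁻¹ : ℝ) i j *ᵥ x)
        = (∑ a, x a * x a) + x i * x j := by
      rw [star_trivial]
      show (∑ a, x a * (sMat (2⁻¹ : ℝ) i j *ᵥ x) a) = _
      rw [Finset.sum_congr rfl fun a _ => by rw [inner a]]
      simp only [mul_add, Finset.sum_add_distrib, mul_ite, mul_zero]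
      rw [Finset.sum_ite_eq' Finset.univ i (fun a => x a * (2⁻¹ * x j)),
        Finset.sum_ite_eq' Finset.univ j (fun a => x a * (2⁻¹ * x i))]
      simp only [Finset.mem_univ, if_pos]
      ring
    rw [hsum]
    obtain ⟨a, ha⟩ := Function.ne_iff.mp hx
    have h2 : x i * x i + x j * x j ≤ ∑ a, x a * x a := by
      have := Finset.sum_le_sum_of_subset_of_nonneg (Finset.subset_univ ({i, j} : Finset (Fin n)))
        (fun k _ _ => mul_self_nonneg (x k))
      rwa [Finset.sum_pair hij.ne] at this
    have h3 : 0 < ∑ a, x a * x a := by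
      refine Finset.sum_pos' (fun k _ => mul_self_nonneg (x k)) ⟨a, Finset.mem_univ a, ?_⟩
      exact mul_self_pos.mpr ha
    nlinarith [sq_nonneg (x i + x j)]

end PD

section Model
variable {n : ℕ}

/-- Evaluation point in `Sym2` form. -/
def sFun (F : Type*) [Field F] (ε : F) (i j : Fin n) : Sym2 (Fin n) → F :=
  Sym2.lift ⟨fun a b => sMat ε i j a b, fun a b => sMat_symm ε i j a b⟩

lemma sFun_mk {F : Type*} [Field F] (ε : F) (i j a b : Fin n) :
    sFun F ε i j s(a, b) = sMat ε i j a b := by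
  simp [sFun]

lemma aeval_fminor (ε : ℂ) (i j : Fin n) (A B : Finset (Fin n)) (h : B.card = A.card) :
    aeval (sFun ℂ ε i j) (fminor (genMat n) A B h)
      = Matrix.det (Matrix.of fun k l : Fin A.card =>
          sMat ε i j (A.orderEmbOfFin rfl k) (B.orderEmbOfFin h l)) := by
  rw [fminor, AlgHom.map_det]
  congr 1
  ext k l
  simp [Matrix.map_apply, genMat, sFun]

lemma aeval_theta0_ne_zero {i j : Fin n} (hlt : i < j) :
    aeval (sFun ℂ (2⁻¹ : ℂ) i j) (theta0 n) ≠ 0 := by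
  rw [theta0, map_prod, Finset.prod_ne_zero_iff]
  intro A _
  rw [aeval_fminor]
  have hmap : (Matrix.of fun k l : Fin A.card =>
        sMat (2⁻¹ : ℂ) i j (A.orderEmbOfFin rfl k) (A.orderEmbOfFin rfl l))
      = (Matrix.of fun k l : Fin A.card =>
          sMat (2⁻¹ : ℝ) i j (A.orderEmbOfFin rfl k) (A.orderEmbOfFin rfl l)).map
          (algebraMap ℝ ℂ) := by
    ext k l
    simp only [Matrix.map_apply, Matrix.of_apply, sMat]
    rw [_root_.map_add]
    congr 1 <;> split <;> simp [map_inv₀]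
  rw [hmap, show ((Matrix.of fun k l : Fin A.card =>
          sMat (2⁻¹ : ℝ) i j (A.orderEmbOfFin rfl k) (A.orderEmbOfFin rfl l)).map
          (algebraMap ℝ ℂ)) = (algebraMap ℝ ℂ).mapMatrix (Matrix.of fun k l : Fin A.card =>
          sMat (2⁻¹ : ℝ) i j (A.orderEmbOfFin rfl k) (A.orderEmbOfFin rfl l)) from rfl,
    ← RingHom.map_det]
  have hpd : (Matrix.of fun k l : Fin A.card =>
      sMat (2⁻¹ : ℝ) i j (A.orderEmbOfFin rfl k) (A.orderEmbOfFin rfl l)).PosDef :=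
    posDef_submatrix_inj (sMat_posDef hlt) (A.orderEmbOfFin rfl).injective
  have hpos := hpd.det_pos
  intro h0
  exact hpos.ne' ((algebraMap ℝ ℂ).injective (h0.trans (map_zero _).symm))

lemma mem_parents {E : Fin n → Fin n → Prop} [DecidableRel E] {k b : Fin n} :
    k ∈ parents E b ↔ E k b := by
  simp [parents]

lemma parents_card_insert {E : Fin n → Fin n → Prop} [DecidableRel E]
    (hE : ∀ i j, E i j → i < j) {a b : Fin n} (hab : ¬ E a b) :
    (insert b (parents E b)).card = (insert a (parents E b)).card := by
  rw [Finset.card_insert_of_notMem (fun h => lt_irrefl b (hE b b (mem_parents.mp h))),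
    Finset.card_insert_of_notMem (fun h => hab (mem_parents.mp h))]

/-- Key lemma A: equality of saturated ideals forces equality of edge sets. -/
lemma satPG_le_edges {E E' : Fin n → Fin n → Prop} [DecidableRel E] [DecidableRel E']
    (hE : ∀ i j, E i j → i < j) (hE' : ∀ i j, E' i j → i < j)
    (h : satPG E = satPG E') {i j : Fin n} (hij : E i j) : E' i j := by
  by_contra hE'ij
  have hlt : i < j := hE i j hij
  have hK'lt : ∀ k ∈ parents E' j, k < j := fun k hk => hE' k j (mem_parents.mp hk)
  have hiK' : i ∉ parents E' j := fun hk => hE'ij (mem_parents.mp hk)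
  have hcard : (insert j (parents E' j)).card = (insert i (parents E' j)).card :=
    parents_card_insert hE' hE'ij
  have hgen : fminor (genMat n) (insert i (parents E' j)) (insert j (parents E' j)) hcard
      ∈ impIdeal E' :=
    Ideal.subset_span ⟨i, j, hlt, hE'ij, hcard, rfl⟩
  have hsatm : fminor (genMat n) (insert i (parents E' j)) (insert j (parents E' j)) hcard
      ∈ satPG E := by
    rw [h]
    exact ⟨0, by simpa using hgen⟩
  obtain ⟨m, hm⟩ := hsatm
  have hIzero : ∀ g ∈ impIdeal E, aeval (sFun ℂ (2⁻¹ : ℂ) i j) g = 0 := by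
    intro g hg
    have hle : impIdeal E ≤ RingHom.ker (aeval (sFun ℂ (2⁻¹ : ℂ) i j)).toRingHom := by
      rw [impIdeal, Ideal.span_le]
      rintro f ⟨a, b, hab, hEab, hc, rfl⟩
      have hne : ¬(a = i ∧ b = j) := by
        rintro ⟨rfl, rfl⟩
        exact hEab hij
      have hKb : ∀ k ∈ parents E b, k < b := fun k hk => hE k b (mem_parents.mp hk)
      show aeval (sFun ℂ (2⁻¹ : ℂ) i j) _ = 0
      rw [aeval_fminor]
      exact det_minor_sMat_eq_zero (2⁻¹ : ℂ) hlt hab hne hKb hc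
    exact hle hg
  have h0 := hIzero _ hm
  rw [_root_.map_mul, _root_.map_pow] at h0
  rcases mul_eq_zero.mp h0 with h1 | h1
  · exact absurd h1 (pow_ne_zero _ (aeval_theta0_ne_zero hlt))
  · rw [aeval_fminor] at h1
    exact det_minor_sMat_ne_zero (inv_ne_zero two_ne_zero) hlt hK'lt hiK' hcard h1

-- rank helpers
lemma subRank_eq_rank_sorted (σ : Matrix (Fin n) (Fin n) ℝ) (A B : Finset (Fin n))
    (h : B.card = A.card) :
    subRank σ A B = (Matrix.of fun k l : Fin A.card =>
      σ (A.orderEmbOfFin rfl k) (B.orderEmbOfFin h l)).rank := by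
  have hmat : (Matrix.of fun k l : Fin A.card =>
      σ (A.orderEmbOfFin rfl k) (B.orderEmbOfFin h l))
      = (σ.submatrix (fun a : A => (a : Fin n)) (fun b : B => (b : Fin n))).submatrix
          (A.orderIsoOfFin rfl).toEquiv (B.orderIsoOfFin h).toEquiv := by
    ext k l
    simp [Matrix.submatrix_apply, Finset.coe_orderIsoOfFin_apply]
  rw [hmat, rank_submatrix_eq'']
  rfl

lemma subRank_principal {σ : Matrix (Fin n) (Fin n) ℝ} (hσ : σ.PosDef) (A : Finset (Fin n)) :
    subRank σ A A = A.card := by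
  have hpd : (σ.submatrix (fun a : A => (a : Fin n)) (fun b : A => (b : Fin n))).PosDef :=
    posDef_submatrix_inj hσ (fun x y hxy => Subtype.ext hxy)
  rw [subRank, rank_eq_card_of_det_ne_zero hpd.det_pos.ne']
  exact Fintype.card_coe A

lemma subRank_le_insert (σ : Matrix (Fin n) (Fin n) ℝ) (A : Finset (Fin n)) (a b : Fin n) :
    subRank σ A A ≤ subRank σ (insert a A) (insert b A) := by
  have hmat : σ.submatrix (fun x : A => (x : Fin n)) (fun x : A => (x : Fin n))
      = (σ.submatrix (fun x : (insert a A : Finset (Fin n)) => (x : Fin n))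
          (fun x : (insert b A : Finset (Fin n)) => (x : Fin n))).submatrix
          (fun x : A => (⟨(x : Fin n), Finset.mem_insert_of_mem x.2⟩ :
            (insert a A : Finset (Fin n))))
          (fun x : A => (⟨(x : Fin n), Finset.mem_insert_of_mem x.2⟩ :
            (insert b A : Finset (Fin n)))) := by
    ext x y
    simp
  rw [subRank, subRank, hmat]
  exact rank_submatrix_le'' _ _ _

/-- The witness matrix lies in `locSet E` whenever `E` contains the edge `(i,j)`. -/
lemma sMat_mem_locSet {E : Fin n → Fin n → Prop} [DecidableRel E]
    (hE : ∀ i j, E i j → i < j) {i j : Fin n} (hij : E i j) :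
    sMat (2⁻¹ : ℝ) i j ∈ locSet E := by
  have hlt : i < j := hE i j hij
  refine ⟨(sMat_posDef hlt).posSemidef, ?_⟩
  intro a b hab hEab
  have hKb : ∀ k ∈ parents E b, k < b := fun k hk => hE k b (mem_parents.mp hk)
  have haK : a ∉ parents E b := fun hk => hEab (mem_parents.mp hk)
  have hcard : (insert b (parents E b)).card = (insert a (parents E b)).card :=
    parents_card_insert hE hEab
  have hne : ¬(a = i ∧ b = j) := by
    rintro ⟨rfl, rfl⟩
    exact hEab hij
  have hdet := det_minor_sMat_eq_zero (2⁻¹ : ℝ) hlt hab hne hKb hcard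
  rw [subRank_principal (sMat_posDef hlt)]
  refine le_antisymm ?_ ?_
  · rw [subRank_eq_rank_sorted _ _ _ hcard]
    have hlt' := rank_lt_card_of_det_eq_zero hdet
    rw [Fintype.card_fin] at hlt'
    have hc : (insert a (parents E b)).card = (parents E b).card + 1 :=
      Finset.card_insert_of_notMem haK
    omega
  · have := subRank_le_insert (sMat (2⁻¹ : ℝ) i j) (parents E b) a b
    rwa [subRank_principal (sMat_posDef hlt)] at this

/-- Key lemma B: equality of the PD parts of the models forces equality of edge sets. -/
lemma locSet_le_edges {E E' : Fin n → Fin n → Prop} [DecidableRel E] [DecidableRel E']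
    (hE : ∀ i j, E i j → i < j) (hE' : ∀ i j, E' i j → i < j)
    (h : locSet E ∩ {σ | σ.PosDef} = locSet E' ∩ {σ | σ.PosDef})
    {i j : Fin n} (hij : E i j) : E' i j := by
  by_contra hE'ij
  have hlt : i < j := hE i j hij
  have hmem : sMat (2⁻¹ : ℝ) i j ∈ locSet E ∩ {σ | σ.PosDef} :=
    ⟨sMat_mem_locSet hE hij, sMat_posDef hlt⟩
  rw [h] at hmem
  have hcond := hmem.1.2 i j hlt hE'ij
  have hK'lt : ∀ k ∈ parents E' j, k < j := fun k hk => hE' k j (mem_parents.mp hk)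
  have hiK' : i ∉ parents E' j := fun hk => hE'ij (mem_parents.mp hk)
  have hcard : (insert j (parents E' j)).card = (insert i (parents E' j)).card :=
    parents_card_insert hE' hE'ij
  have hdet := det_minor_sMat_ne_zero (inv_ne_zero (two_ne_zero (α := ℝ))) hlt hK'lt hiK' hcard
  rw [subRank_eq_rank_sorted _ _ _ hcard, rank_eq_card_of_det_ne_zero hdet,
    Fintype.card_fin, subRank_principal (sMat_posDef hlt),
    Finset.card_insert_of_notMem hiK'] at hcond
  omega

-- congruence lemmas
lemma satPG_congr {E E' : Fin n → Fin n → Prop} [iE : DecidableRel E] [iE' : DecidableRel E']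
    (h : ∀ i j, E i j ↔ E' i j) : satPG E = satPG E' := by
  have hfun : E = E' := funext fun i => funext fun j => propext (h i j)
  subst hfun
  have hinst : iE = iE' := by
    funext a b
    exact Subsingleton.elim _ _
  exact congrArg (fun inst => @satPG n E inst) hinst

lemma locSet_congr {E E' : Fin n → Fin n → Prop} [iE : DecidableRel E] [iE' : DecidableRel E']
    (h : ∀ i j, E i j ↔ E' i j) : locSet E = locSet E' := by
  have hfun : E = E' := funext fun i => funext fun j => propext (h i j)
  subst hfun
  have hinst : iE = iE' := by
    funext a b
    exact Subsingleton.elim _ _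
  exact congrArg (fun inst => @locSet n E inst) hinst

end Model

/-- Proposition 6 of the paper: the saturated ideals of two DAGs coincide exactly when the two
models admit the same non-singular Gaussian covariance matrices. -/
theorem satPG_eq_iff_locSet_posDef_eq {n : ℕ} (hn : 1 ≤ n)
    (E : Fin n → Fin n → Prop) [DecidableRel E] (hE : ∀ i j, E i j → i < j)
    (E' : Fin n → Fin n → Prop) [DecidableRel E'] (hE' : ∀ i j, E' i j → i < j) :
    satPG E = satPG E' ↔
      locSet E ∩ {σ | σ.PosDef} = locSet E' ∩ {σ | σ.PosDef} := by
  constructor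
  · intro hsat
    have hiff : ∀ a b, E a b ↔ E' a b := fun a b =>
      ⟨fun hab => satPG_le_edges hE hE' hsat hab, fun hab => satPG_le_edges hE' hE hsat.symm hab⟩
    rw [locSet_congr hiff]
  · intro hloc
    have hiff : ∀ a b, E a b ↔ E' a b := fun a b =>
      ⟨fun hab => locSet_le_edges hE hE' hloc hab, fun hab => locSet_le_edges hE' hE hloc.symm hab⟩
    rw [satPG_congr hiff]
end
end

section
/- Let G be a topologically sorted DAG on n nodes whose underlying undirected graph is a tree: the simple graph on Fin n with adjacency relation (i ≠ j ∧ (E i j ∨ E j i)) is connected and acyclic. Then the ideal Î_G ⊆ R̂ of imposed relations (with unit diagonal) is a prime ideal; in particular Î_G equals its saturation p̂_G at θ̂₀. -/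
open MvPolynomial Matrix

noncomputable section

/-- The generic symmetric matrix with unit diagonal, with off-diagonal `(i,j)` entry the variable
indexed by the unordered pair `s(i,j)`. -/
def hatMat (n : ℕ) :
    Matrix (Fin n) (Fin n) (MvPolynomial {p : Sym2 (Fin n) // ¬ p.IsDiag} ℂ) :=
  fun i j =>
    if h : i = j then 1
    else X ⟨Sym2.mk i j, by simpa [Sym2.mk_isDiag_iff] using h⟩

/-- The ideal of imposed relations `Î_G` with unit diagonal, generated by the minors
`det M̂_{{i}∪K,{j}∪K}` over all pairs `i < j` with `¬ E i j`, where `K = pa(j)`. -/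
def impIdealHat {n : ℕ} (E : Fin n → Fin n → Prop) [DecidableRel E] :
    Ideal (MvPolynomial {p : Sym2 (Fin n) // ¬ p.IsDiag} ℂ) :=
  Ideal.span { f | ∃ i j : Fin n, ∃ _ : i < j, ∃ _ : ¬ E i j,
    ∃ h : (insert j (parents E j)).card = (insert i (parents E j)).card,
      f = fminor (hatMat n) (insert i (parents E j)) (insert j (parents E j)) h }

/-- The product `θ̂₀` of all principal minors of the generic unit-diagonal symmetric matrix. -/
def thetaHat (n : ℕ) : MvPolynomial {p : Sym2 (Fin n) // ¬ p.IsDiag} ℂ :=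
  ∏ A : Finset (Fin n), fminor (hatMat n) A A rfl

/-- The saturation `p̂_G` of `Î_G` at `θ̂₀`. -/
def satPGhat {n : ℕ} (E : Fin n → Fin n → Prop) [DecidableRel E] :
    Ideal (MvPolynomial {p : Sym2 (Fin n) // ¬ p.IsDiag} ℂ) :=
  satIdeal (impIdealHat E) (thetaHat n)

/-- The undirected graph underlying the DAG with edge relation `E`. -/
def underGraph {n : ℕ} (E : Fin n → Fin n → Prop) : SimpleGraph (Fin n) where
  Adj i j := i ≠ j ∧ (E i j ∨ E j i)
  symm := ⟨fun i j h => ⟨h.1.symm, h.2.symm⟩⟩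
  loopless := ⟨fun i h => h.1 rfl⟩

set_option maxHeartbeats 1000000
set_option synthInstance.maxHeartbeats 400000

namespace TreeProof

variable {n : ℕ} (E : Fin n → Fin n → Prop) [DecidableRel E]

abbrev S (n : ℕ) := MvPolynomial {p : Sym2 (Fin n) // ¬ p.IsDiag} ℂ

/-- SEM-recursion "covariance" polynomial, intended for `a < b`. -/
def Fsig (a b : Fin n) : S n :=
  if hab : a < b then
    ∑ m ∈ (parents E b).attach,
      if hm : (m : Fin n) < b then
        hatMat n m b * (if a = (m : Fin n) then 1
          else if a < (m : Fin n) then Fsig a m else Fsig (m : Fin n) a)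
      else 0
  else 0
termination_by b.val
decreasing_by
  · exact hm
  · exact hab

def SM (a b : Fin n) : S n :=
  if a = b then 1 else if a < b then Fsig E a b else Fsig E b a

lemma SM_symm (a b : Fin n) : SM E a b = SM E b a := by
  rcases lt_trichotomy a b with h | h | h
  · simp [SM, h, h.ne, h.ne', lt_asymm h]
  · simp [SM, h]
  · simp [SM, h, h.ne, h.ne', lt_asymm h]

lemma SM_self (a : Fin n) : SM E a a = 1 := by simp [SM]

lemma SM_rec (hE : ∀ i j, E i j → i < j) {a b : Fin n} (hab : a < b) :
    SM E a b = ∑ m ∈ parents E b, hatMat n m b * SM E a m := by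
  rw [SM, if_neg hab.ne, if_pos hab, Fsig, dif_pos hab, ← Finset.sum_attach (parents E b)
    (fun m => hatMat n m b * SM E a m)]
  refine Finset.sum_congr rfl fun m _ => ?_
  have hm : (m : Fin n) < b := by
    have h2 := m.2
    simp only [parents, Finset.mem_filter] at h2
    exact hE _ _ h2.2
  rw [dif_pos hm]
  rcases eq_or_ne a (m : Fin n) with h | h
  · simp [SM, h]
  · simp only [SM, if_neg h]


def underGraph' {n : ℕ} (E : Fin n → Fin n → Prop) : SimpleGraph (Fin n) where
  Adj i j := i ≠ j ∧ (E i j ∨ E j i)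
  symm := ⟨fun i j h => ⟨h.1.symm, h.2.symm⟩⟩
  loopless := ⟨fun i h => h.1 rfl⟩

/-- A "collider" pattern in a list of vertices. -/
def ListColl (L : List (Fin n)) : Prop :=
  ∃ l₁ x y z l₂, L = l₁ ++ x :: y :: z :: l₂ ∧ E x y ∧ E z y

lemma listColl_cons {L : List (Fin n)} (x : Fin n) (h : ListColl E L) :
    ListColl E (x :: L) := by
  obtain ⟨l₁, a, b, c, l₂, rfl, h1, h2⟩ := h
  exact ⟨x :: l₁, a, b, c, l₂, rfl, h1, h2⟩

lemma listColl_length {L : List (Fin n)} (h : ListColl E L) : 3 ≤ L.length := by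
  obtain ⟨l₁, a, b, c, l₂, rfl, -, -⟩ := h
  simp; omega

lemma listColl_reverse {L : List (Fin n)} (h : ListColl E L) : ListColl E L.reverse := by
  obtain ⟨l₁, a, b, c, l₂, rfl, h1, h2⟩ := h
  refine ⟨l₂.reverse, c, b, a, l₁.reverse, ?_, h2, h1⟩
  simp

lemma listColl_cons_elim {x : Fin n} {L : List (Fin n)} (h : ListColl E (x :: L)) :
    ListColl E L ∨ ∃ y z L', L = y :: z :: L' ∧ E x y ∧ E z y := by
  obtain ⟨l₁, a, b, c, l₂, heq, h1, h2⟩ := h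
  cases l₁ with
  | nil =>
    simp only [List.nil_append, List.cons.injEq] at heq
    exact Or.inr ⟨b, c, l₂, heq.2, heq.1 ▸ h1, h2⟩
  | cons d l₁' =>
    simp only [List.cons_append, List.cons.injEq] at heq
    exact Or.inl ⟨l₁', a, b, c, l₂, heq.2, h1, h2⟩

open SimpleGraph in
lemma SM_coll_zero (hE : ∀ i j, E i j → i < j) (hac : (underGraph' E).IsAcyclic) :
    ∀ (N : ℕ) (b a : Fin n), b.val = N → a < b →
    ∀ p : (underGraph' E).Walk b a, p.IsPath → ListColl E p.support → SM E a b = 0 := by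
  intro N
  induction N using Nat.strong_induction_on with
  | _ N IH =>
  intro b a hbN hab p hp hcoll
  have key : ∀ (u v : Fin n), u < b → v < b → u ≠ v →
      ∀ q : (underGraph' E).Walk v u, q.IsPath → ListColl E q.support → SM E u v = 0 := by
    intro u v hub hvb huv q hq hcq
    rcases lt_or_gt_of_ne huv with h | h
    · exact IH v.val (hbN ▸ hvb) v u rfl h q hq hcq
    · rw [SM_symm]
      exact IH u.val (hbN ▸ hub) u v rfl h q.reverse hq.reverse
        (by rw [Walk.support_reverse]; exact listColl_reverse E hcq)
  rw [SM_rec E hE hab]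
  apply Finset.sum_eq_zero
  intro m hmP
  have hEmb : E m b := by
    simp only [parents, Finset.mem_filter] at hmP
    exact hmP.2
  have hmb : m < b := hE _ _ hEmb
  suffices hz : SM E a m = 0 by rw [hz, mul_zero]
  rcases eq_or_ne a m with rfl | ham
  · -- a is itself a parent of b : then the path is the single edge, no collider
    exfalso
    have hadj : (underGraph' E).Adj b a := (⟨hab.ne', Or.inr hEmb⟩ : b ≠ a ∧ (E b a ∨ E a b))
    have hsp : (Walk.cons hadj (Walk.nil : (underGraph' E).Walk a a)).IsPath := by
      simp [Walk.cons_isPath_iff, hab.ne']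
    have hpe : p = Walk.cons hadj Walk.nil := by
      have := (isAcyclic_iff_path_unique.mp hac) ⟨p, hp⟩ ⟨Walk.cons hadj Walk.nil, hsp⟩
      exact congrArg Subtype.val this
    rw [hpe] at hcoll
    have := listColl_length E hcoll
    simp [Walk.support_cons] at this
  · by_cases hmem : m ∈ p.support
    · -- m is on the path; it must be the second vertex
      have hadj : (underGraph' E).Adj b m := (⟨hmb.ne', Or.inr hEmb⟩ : b ≠ m ∧ (E b m ∨ E m b))
      have hsp : (Walk.cons hadj (Walk.nil : (underGraph' E).Walk m m)).IsPath := by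
        simp [Walk.cons_isPath_iff, hmb.ne']
      have ht : p.takeUntil m hmem = Walk.cons hadj Walk.nil := by
        have := (isAcyclic_iff_path_unique.mp hac) ⟨p.takeUntil m hmem, hp.takeUntil hmem⟩
          ⟨Walk.cons hadj Walk.nil, hsp⟩
        exact congrArg Subtype.val this
      set d := p.dropUntil m hmem with hd
      have hps : p.support = b :: d.support := by
        conv_lhs => rw [← p.take_spec hmem]
        rw [Walk.support_append, ht]
        simp [Walk.support_cons]
        exact (d.support_eq_cons).symm ▸ rfl
      rw [hps] at hcoll
      rcases listColl_cons_elim E hcoll with hc | ⟨y, z, L', hds, hby, hzy⟩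
      · exact key a m hab hmb ham d (hp.dropUntil hmem) hc
      · exfalso
        have hym : y = m := by
          have h3 := d.support_eq_cons
          rw [hds] at h3
          exact (List.cons.injEq .. ▸ h3).1
        exact absurd (hE _ _ (hym ▸ hby)) (not_lt.mpr hmb.le)
    · have hadj : (underGraph' E).Adj m b := (⟨hmb.ne, Or.inl hEmb⟩ : m ≠ b ∧ (E m b ∨ E b m))
      have hp' : (Walk.cons hadj p).IsPath := hp.cons hmem
      exact key a m hab hmb ham (Walk.cons hadj p) hp'
        (by rw [Walk.support_cons]; exact listColl_cons E m hcoll)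


open SimpleGraph in
lemma SM_coparents (hE : ∀ i j, E i j → i < j) (hac : (underGraph' E).IsAcyclic)
    {j k k' : Fin n} (hk : E k j) (hk' : E k' j) (hne : k ≠ k') : SM E k k' = 0 := by
  have hkj := hE _ _ hk
  have hk'j := hE _ _ hk'
  have hadj1 : (underGraph' E).Adj k' j := (⟨hk'j.ne, Or.inl hk'⟩ : k' ≠ j ∧ (E k' j ∨ E j k'))
  have hadj2 : (underGraph' E).Adj j k := (⟨hkj.ne', Or.inr hk⟩ : j ≠ k ∧ (E j k ∨ E k j))
  set w : (underGraph' E).Walk k' k := Walk.cons hadj1 (Walk.cons hadj2 Walk.nil) with hw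
  have hwp : w.IsPath := by
    simp [hw, Walk.cons_isPath_iff, Walk.support_cons, hne.symm, hkj.ne, hkj.ne', hk'j.ne, hk'j.ne']
  have hwc : ListColl E w.support := by
    refine ⟨[], k', j, k, [], ?_, hk', hk⟩
    simp [hw, Walk.support_cons]
  rcases lt_or_gt_of_ne hne with h | h
  · exact SM_coll_zero E hE hac k'.val k' k rfl h w hwp hwc
  · rw [SM_symm]
    exact SM_coll_zero E hE hac k.val k k' rfl h w.reverse hwp.reverse
      (by rw [Walk.support_reverse]; exact listColl_reverse E hwc)

open SimpleGraph in
lemma SM_edge (hE : ∀ i j, E i j → i < j) (hac : (underGraph' E).IsAcyclic)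
    {k j : Fin n} (hkj : E k j) : SM E k j = hatMat n k j := by
  rw [SM_rec E hE (hE _ _ hkj)]
  rw [Finset.sum_eq_single k]
  · rw [SM_self, mul_one]
  · intro m hm hmk
    have hEmj : E m j := by
      simp only [parents, Finset.mem_filter] at hm
      exact hm.2
    rw [SM_coparents E hE hac hkj hEmj hmk.symm, mul_zero]
  · intro hk
    exact absurd (by simp [parents, hkj] : k ∈ parents E j) hk

section Det

variable {R : Type*} [CommRing R] {ι : Type*} [DecidableEq ι] [Fintype ι]

lemma det_updateCol_add_sum (M : Matrix ι ι R) (c : ι) (f : ι → R) :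
    ∀ s : Finset ι, c ∉ s →
      (M.updateCol c (fun r => M r c + ∑ l ∈ s, f l * M r l)).det = M.det := by
  intro s
  induction s using Finset.induction with
  | empty =>
    intro _
    simp only [Finset.sum_empty, add_zero]
    rw [show (fun r => M r c) = fun r => M r c from rfl]
    rw [Matrix.updateCol_eq_self]
  | @insert a s' ha ih =>
    intro hc
    have hca : c ≠ a := fun h => hc (h ▸ Finset.mem_insert_self a s')
    have hcs : c ∉ s' := fun h => hc (Finset.mem_insert_of_mem h)
    set M₁ := M.updateCol c (fun r => M r c + ∑ l ∈ s', f l * M r l) with hM₁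
    have key : M.updateCol c (fun r => M r c + ∑ l ∈ insert a s', f l * M r l)
        = M₁.updateCol c (fun r => M₁ r c + f a • M₁ r a) := by
      funext r l
      rcases eq_or_ne l c with rfl | hl
      · rw [Matrix.updateCol_self, Matrix.updateCol_self, hM₁,
          Matrix.updateCol_self, Matrix.updateCol_ne hca.symm,
          Finset.sum_insert ha, smul_eq_mul]
        ring
      · rw [Matrix.updateCol_ne hl, Matrix.updateCol_ne hl, hM₁,
          Matrix.updateCol_ne hl]
    rw [key, Matrix.det_updateCol_add_smul_self M₁ hca (f a), ih hcs]

lemma det_eq_zero_of_col_sum (M : Matrix ι ι R) (c : ι) (f : ι → R)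
    (h : ∀ r, M r c = ∑ l ∈ Finset.univ.erase c, f l * M r l) : M.det = 0 := by
  set M₀ := M.updateCol c 0 with hM₀
  have h1 : M = M₀.updateCol c (fun r => M₀ r c + ∑ l ∈ Finset.univ.erase c, f l * M₀ r l) := by
    funext r l
    rcases eq_or_ne l c with rfl | hl
    · rw [Matrix.updateCol_self]
      rw [h r]
      simp only [hM₀]
      rw [Matrix.updateCol_self]
      simp only [Pi.zero_apply, zero_add]
      exact Finset.sum_congr rfl fun x hx => by
        rw [Matrix.updateCol_ne (Finset.ne_of_mem_erase hx)]
    · rw [Matrix.updateCol_ne hl]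
      simp only [hM₀]
      rw [Matrix.updateCol_ne hl]
  rw [h1, det_updateCol_add_sum M₀ c f _ (Finset.notMem_erase c _)]
  apply Matrix.det_eq_zero_of_column_eq_zero c
  intro r
  simp [hM₀]

end Det

lemma mem_parents_lt (hE : ∀ i j, E i j → i < j) {m j : Fin n}
    (hm : m ∈ parents E j) : m < j := by
  simp only [parents, Finset.mem_filter] at hm
  exact hE _ _ hm.2

lemma not_mem_parents_self (hE : ∀ i j, E i j → i < j) (j : Fin n) : j ∉ parents E j :=
  fun h => absurd (mem_parents_lt E hE h) (lt_irrefl j)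

open SimpleGraph in
/-- The key vanishing: any minor of the SM matrix with columns `{j} ∪ pa(j)` and
rows all `< j` vanishes. -/
lemma det_SM_minor_zero (hE : ∀ i j, E i j → i < j) {j : Fin n} (A : Finset (Fin n))
    (hA : ∀ x ∈ A, x < j) (h : (insert j (parents E j)).card = A.card) :
    (Matrix.of fun r l : Fin A.card =>
      SM E (A.orderEmbOfFin rfl r) ((insert j (parents E j)).orderEmbOfFin h l)).det = 0 := by
  set B := insert j (parents E j) with hB
  set eA := A.orderEmbOfFin rfl with heA
  set eB := B.orderEmbOfFin h with heB
  have hjB : j ∈ B := Finset.mem_insert_self _ _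
  have hrange : ∀ m ∈ B, ∃ l, eB l = m := by
    intro m hm
    have := Finset.range_orderEmbOfFin B h
    rw [Set.ext_iff] at this
    exact (this m).mpr (by simpa using hm)
  obtain ⟨c, hc⟩ := hrange j hjB
  have heBK : ∀ l, l ≠ c → eB l ∈ parents E j := by
    intro l hl
    have h1 : eB l ∈ B := by
      have := Finset.range_orderEmbOfFin B h
      rw [Set.ext_iff] at this
      exact by simpa using (this (eB l)).mp ⟨l, rfl⟩
    rcases Finset.mem_insert.mp h1 with h2 | h2
    · exact absurd (eB.injective (h2.trans hc.symm)) hl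
    · exact h2
  apply det_eq_zero_of_col_sum _ c (fun l => hatMat n (eB l) j)
  intro r
  have hr : eA r < j := hA _ (Finset.orderEmbOfFin_mem A rfl r)
  show SM E (eA r) (eB c) = _
  rw [hc, SM_rec E hE hr]
  refine (Finset.sum_bij (fun l _ => eB l) ?_ ?_ ?_ ?_).symm
  · intro l hl
    exact heBK l (Finset.ne_of_mem_erase hl)
  · intro l₁ _ l₂ _ hw
    exact eB.injective hw
  · intro m hm
    obtain ⟨l, hl⟩ := hrange m (Finset.mem_insert_of_mem hm)
    refine ⟨l, Finset.mem_erase.mpr ⟨?_, Finset.mem_univ l⟩, hl⟩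
    intro hlc
    rw [hlc, hc] at hl
    exact absurd hl.symm (mem_parents_lt E hE hm).ne
  · intro l _
    rfl

open SimpleGraph in
lemma isUnit_det_updateRow (hE : ∀ i j, E i j → i < j) (hac : (underGraph' E).IsAcyclic)
    {i j : Fin n} (hij : i < j) (hnE : ¬ E i j)
    (h : (insert j (parents E j)).card = (insert i (parents E j)).card)
    (r₀ c : Fin (insert i (parents E j)).card)
    (hr₀ : (insert i (parents E j)).orderEmbOfFin rfl r₀ = i)
    (hc : (insert j (parents E j)).orderEmbOfFin h c = j) :
    IsUnit (((Matrix.of fun r l : Fin (insert i (parents E j)).card =>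
        SM E ((insert i (parents E j)).orderEmbOfFin rfl r)
          ((insert j (parents E j)).orderEmbOfFin h l)).updateRow r₀
            (Pi.single c 1)).det) := by
  classical
  set eA := (insert i (parents E j)).orderEmbOfFin rfl with heA
  set eB := (insert j (parents E j)).orderEmbOfFin h with heB
  have hiK : i ∉ parents E j := by
    intro hi
    simp only [parents, Finset.mem_filter] at hi
    exact hnE hi.2
  have hjK : j ∉ parents E j := not_mem_parents_self E hE j
  have hrange : ∀ m ∈ insert j (parents E j), ∃ l, eB l = m := by
    intro m hm
    have h1 := Finset.range_orderEmbOfFin (insert j (parents E j)) h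
    rw [Set.ext_iff] at h1
    exact (h1 m).mpr (by simpa using hm)
  have hAK : ∀ l, eA l ≠ i → eA l ∈ parents E j := by
    intro l hl
    rcases Finset.mem_insert.mp (Finset.orderEmbOfFin_mem (insert i (parents E j)) rfl l)
      with h1 | h1
    · exact absurd h1 hl
    · exact h1
  have hmemB : ∀ l, (if eA l = i then j else eA l) ∈ insert j (parents E j) := by
    intro l
    rcases eq_or_ne (eA l) i with h1 | h1
    · rw [if_pos h1]; exact Finset.mem_insert_self _ _
    · rw [if_neg h1]; exact Finset.mem_insert_of_mem (hAK l h1)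
  set t : Fin (insert i (parents E j)).card → Fin (insert i (parents E j)).card :=
    fun l => Classical.choose (hrange _ (hmemB l)) with ht
  have htspec : ∀ l, eB (t l) = if eA l = i then j else eA l :=
    fun l => Classical.choose_spec (hrange _ (hmemB l))
  have htinj : Function.Injective t := by
    intro l₁ l₂ hl
    have h1 : (if eA l₁ = i then j else eA l₁) = (if eA l₂ = i then j else eA l₂) := by
      rw [← htspec, ← htspec, hl]
    apply eA.injective
    rcases eq_or_ne (eA l₁) i with h2 | h2 <;> rcases eq_or_ne (eA l₂) i with h3 | h3
    · rw [h2, h3]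
    · rw [if_pos h2, if_neg h3] at h1
      have h4 := hAK l₂ h3
      rw [← h1] at h4
      exact absurd h4 hjK
    · rw [if_neg h2, if_pos h3] at h1
      have h4 := hAK l₁ h2
      rw [h1] at h4
      exact absurd h4 hjK
    · rwa [if_neg h2, if_neg h3] at h1
  set τ : Equiv.Perm (Fin (insert i (parents E j)).card) :=
    Equiv.ofBijective t (Finite.injective_iff_bijective.mp htinj) with hτ
  have hτapp : ∀ l, τ l = t l := fun l => rfl
  have labelEq : ∀ l, eB (τ l) = if eA l = i then j else eA l := by
    intro l; rw [hτapp]; exact htspec l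
  have hτr₀ : τ r₀ = c := by
    apply eB.injective
    rw [labelEq, hr₀, if_pos rfl, hc]
  set P := (Matrix.of fun r l : Fin (insert i (parents E j)).card =>
      SM E (eA r) (eB l)).updateRow r₀ (Pi.single c 1) with hP
  set v : Fin (insert i (parents E j)).card → S n :=
    fun r => if r = r₀ then 1 else hatMat n (eA r) j with hv
  have hQ : P.submatrix id τ
      = (1 : Matrix (Fin (insert i (parents E j)).card)
          (Fin (insert i (parents E j)).card) (S n)).updateCol r₀ v := by
    funext u w
    rw [Matrix.submatrix_apply, id_eq]
    by_cases hr : u = r₀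
    · rw [hr, hP, Matrix.updateRow_self]
      by_cases hl : w = r₀
      · rw [hl, hτr₀, Pi.single_eq_same, Matrix.updateCol_self, hv]
        simp
      · rw [Pi.single_eq_of_ne (fun hh => hl (τ.injective (hh.trans hτr₀.symm))),
          Matrix.updateCol_ne hl, Matrix.one_apply_ne (fun hh => hl hh.symm)]
    · rw [hP, Matrix.updateRow_ne hr, Matrix.of_apply]
      have hkK : eA u ∈ parents E j := by
        apply hAK
        intro hh
        exact hr (eA.injective (hh.trans hr₀.symm))
      have hEk : E (eA u) j := by
        simp only [parents, Finset.mem_filter] at hkK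
        exact hkK.2
      by_cases hl : w = r₀
      · rw [hl, labelEq, hr₀, if_pos rfl, Matrix.updateCol_self]
        simp only [hv]
        rw [if_neg hr]
        exact SM_edge E hE hac hEk
      · have hneq : eA w ≠ i := fun hh => hl (eA.injective (hh.trans hr₀.symm))
        rw [labelEq, if_neg hneq, Matrix.updateCol_ne hl]
        by_cases hrl : u = w
        · rw [hrl, SM_self, Matrix.one_apply_eq]
        · have hEl : E (eA w) j := by
            have h5 := hAK w hneq
            simp only [parents, Finset.mem_filter] at h5
            exact h5.2
          rw [Matrix.one_apply_ne hrl,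
            SM_coparents E hE hac hEk hEl (fun hh => hrl (eA.injective hh))]
  have hdetQ : (P.submatrix id τ).det = 1 := by
    rw [hQ, ← Matrix.cramer_apply, Matrix.cramer_one]
    simp [hv]
  have hsign := Matrix.det_permute' τ P
  rw [hdetQ] at hsign
  rcases Int.units_eq_one_or (Equiv.Perm.sign τ) with hs | hs <;> rw [hs] at hsign
  · simp only [Units.val_one, Int.cast_one, one_mul] at hsign
    rw [← hsign]
    exact isUnit_one
  · simp only [Units.val_neg, Units.val_one, Int.cast_neg, Int.cast_one, neg_mul, one_mul]
      at hsign
    have hPdet : P.det = -1 := by linear_combination hsign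
    rw [hPdet]
    exact isUnit_one.neg

lemma hatMat_symm (a b : Fin n) : hatMat n a b = hatMat n b a := by
  unfold hatMat
  rcases eq_or_ne a b with rfl | hab
  · rfl
  · rw [dif_neg hab, dif_neg hab.symm]
    congr 1
    exact Subtype.ext (Sym2.eq_swap)

/-- The impIdealHat is defined in the ambient file; restate it here for scratch. -/
def impIdealHat' : Ideal (S n) :=
  Ideal.span { f | ∃ i j : Fin n, ∃ _ : i < j, ∃ _ : ¬ E i j,
    ∃ h : (insert j (parents E j)).card = (insert i (parents E j)).card,
      f = Matrix.det (Matrix.of fun k l : Fin (insert i (parents E j)).card =>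
        hatMat n ((insert i (parents E j)).orderEmbOfFin rfl k)
          ((insert j (parents E j)).orderEmbOfFin h l)) }

open SimpleGraph in
lemma binom_mem (hE : ∀ i j, E i j → i < j) (hac : (underGraph' E).IsAcyclic) :
    ∀ (N : ℕ) (j i : Fin n), j.val = N → i < j →
      hatMat n i j - SM E i j ∈ impIdealHat' E := by
  intro N
  induction N using Nat.strong_induction_on with
  | _ N IH =>
  intro j i hjN hij
  have IH2 : ∀ a b : Fin n, a < j → b < j → hatMat n a b - SM E a b ∈ impIdealHat' E := by
    intro a b haj hbj
    rcases lt_trichotomy a b with h1 | h1 | h1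
    · exact IH b.val (hjN ▸ hbj) b a rfl h1
    · rw [h1]
      have h2 : hatMat n b b = 1 := by simp [hatMat]
      rw [h2, SM_self, sub_self]
      exact zero_mem _
    · have h2 := IH a.val (hjN ▸ haj) a b rfl h1
      rw [hatMat_symm, SM_symm]
      exact h2
  by_cases hEij : E i j
  · rw [SM_edge E hE hac hEij, sub_self]
    exact zero_mem _
  · have hiK : i ∉ parents E j := by
      intro hi
      simp only [parents, Finset.mem_filter] at hi
      exact hEij hi.2
    have hjK : j ∉ parents E j := not_mem_parents_self E hE j
    have hcard : (insert j (parents E j)).card = (insert i (parents E j)).card := by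
      rw [Finset.card_insert_of_notMem hjK, Finset.card_insert_of_notMem hiK]
    set eA := (insert i (parents E j)).orderEmbOfFin rfl with heA
    set eB := (insert j (parents E j)).orderEmbOfFin hcard with heB
    have hGen : (Matrix.of fun k l : Fin (insert i (parents E j)).card =>
        hatMat n (eA k) (eB l)).det ∈ impIdealHat' E :=
      Ideal.subset_span ⟨i, j, hij, hEij, hcard, rfl⟩
    have hrangeA : ∀ m ∈ insert i (parents E j), ∃ l, eA l = m := by
      intro m hm
      have h1 := Finset.range_orderEmbOfFin (insert i (parents E j)) rfl
      rw [Set.ext_iff] at h1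
      exact (h1 m).mpr (by simpa using hm)
    have hrangeB : ∀ m ∈ insert j (parents E j), ∃ l, eB l = m := by
      intro m hm
      have h1 := Finset.range_orderEmbOfFin (insert j (parents E j)) hcard
      rw [Set.ext_iff] at h1
      exact (h1 m).mpr (by simpa using hm)
    obtain ⟨r₀, hr₀⟩ := hrangeA i (Finset.mem_insert_self _ _)
    obtain ⟨c, hc⟩ := hrangeB j (Finset.mem_insert_self _ _)
    have hAlt : ∀ x ∈ insert i (parents E j), x < j := by
      intro x hx
      rcases Finset.mem_insert.mp hx with h1 | h1
      · exact h1 ▸ hij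
      · exact mem_parents_lt E hE h1
    set Sm := (Matrix.of fun r l : Fin (insert i (parents E j)).card =>
      SM E (eA r) (eB l)) with hSm
    set D := (Sm.updateRow r₀ (Pi.single c 1)).det with hD
    have base_eq : ∀ t : S n, Function.update (Sm r₀) c t
        = (Function.update (Sm r₀) c 0) + Pi.single c t := by
      intro t
      funext l
      rcases eq_or_ne l c with rfl | hl
      · simp [Function.update_self]
      · simp [Function.update_of_ne hl, Pi.single_eq_of_ne hl]
    have hlin : ∀ t : S n, (Sm.updateRow r₀ (Function.update (Sm r₀) c t)).det
        = (Sm.updateRow r₀ (Function.update (Sm r₀) c 0)).det + t * D := by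
      intro t
      rw [base_eq, Matrix.det_updateRow_add]
      congr 1
      have hsingle : Pi.single c t = t • ((Pi.single c (1 : S n)) : Fin (insert i (parents E j)).card → S n) := by
        funext l
        rcases eq_or_ne l c with rfl | hl
        · simp
        · simp [Pi.single_eq_of_ne hl]
      rw [hsingle, Matrix.det_updateRow_smul, hD]
    have hself : Sm.updateRow r₀ (Function.update (Sm r₀) c (SM E i j)) = Sm := by
      have h1 : Function.update (Sm r₀) c (SM E i j) = Sm r₀ := by
        funext l
        rcases eq_or_ne l c with rfl | hl
        · rw [Function.update_self, hSm]
          show SM E i j = SM E (eA r₀) (eB l)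
          rw [hr₀, hc]
        · rw [Function.update_of_ne hl]
      rw [h1, Matrix.updateRow_eq_self]
    have hSmdet : Sm.det = 0 := det_SM_minor_zero E hE (insert i (parents E j)) hAlt hcard
    set Mt := Sm.updateRow r₀ (Function.update (Sm r₀) c (hatMat n i j)) with hMt
    have hdetMt : Mt.det = (hatMat n i j - SM E i j) * D := by
      have h1 := hlin (hatMat n i j)
      have h2 := hlin (SM E i j)
      rw [hself] at h2
      rw [hSmdet] at h2
      rw [hMt, h1]
      linear_combination -h2
    -- congruence modulo the ideal
    set q := Ideal.Quotient.mk (impIdealHat' E) with hq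
    have hcong : q (Mt.det) = q ((Matrix.of fun k l : Fin (insert i (parents E j)).card =>
        hatMat n (eA k) (eB l)).det) := by
      rw [RingHom.map_det, RingHom.map_det, RingHom.mapMatrix_apply, RingHom.mapMatrix_apply]
      congr 1
      funext r l
      rw [Matrix.map_apply, Matrix.map_apply]
      rw [Ideal.Quotient.mk_eq_mk_iff_sub_mem]
      by_cases hr : r = r₀
      · rw [hr, hMt, Matrix.updateRow_self]
        by_cases hl : l = c
        · rw [hl, Function.update_self, Matrix.of_apply, hr₀, hc, sub_self]
          exact zero_mem _
        · rw [Function.update_of_ne hl, hSm]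
          show SM E (eA r₀) (eB l) - hatMat n (eA r₀) (eB l) ∈ _
          rw [hr₀]
          have hlK : eB l ∈ parents E j := by
            rcases Finset.mem_insert.mp
              (Finset.orderEmbOfFin_mem (insert j (parents E j)) hcard l) with h1 | h1
            · exact absurd (eB.injective (h1.trans hc.symm)) hl
            · exact h1
          have h3 := IH2 i (eB l) hij (mem_parents_lt E hE hlK)
          have h4 := (impIdealHat' E).neg_mem h3
          rw [neg_sub] at h4
          exact h4
      · rw [hMt, Matrix.updateRow_ne hr, hSm]
        show SM E (eA r) (eB l) - hatMat n (eA r) (eB l) ∈ _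
        have hrK : eA r ∈ parents E j := by
          rcases Finset.mem_insert.mp
            (Finset.orderEmbOfFin_mem (insert i (parents E j)) rfl r) with h1 | h1
          · exact absurd (eA.injective (h1.trans hr₀.symm)) hr
          · exact h1
        have hEr : E (eA r) j := by
          simp only [parents, Finset.mem_filter] at hrK
          exact hrK.2
        by_cases hl : l = c
        · rw [hl, hc, SM_edge E hE hac hEr, sub_self]
          exact zero_mem _
        · have hlK : eB l ∈ parents E j := by
            rcases Finset.mem_insert.mp
              (Finset.orderEmbOfFin_mem (insert j (parents E j)) hcard l) with h1 | h1
            · exact absurd (eB.injective (h1.trans hc.symm)) hl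
            · exact h1
          have h3 := IH2 (eA r) (eB l) (mem_parents_lt E hE hrK) (mem_parents_lt E hE hlK)
          have h4 := (impIdealHat' E).neg_mem h3
          rw [neg_sub] at h4
          exact h4
    have hMtmem : Mt.det ∈ impIdealHat' E := by
      have h1 : q (Mt.det) = 0 := by
        rw [hcong]
        exact (Ideal.Quotient.eq_zero_iff_mem).mpr hGen
      exact (Ideal.Quotient.eq_zero_iff_mem).mp h1
    rw [hdetMt] at hMtmem
    have hD' := isUnit_det_updateRow E hE hac hij hEij hcard r₀ c hr₀ hc
    obtain ⟨u, hu⟩ := hD'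
    have hfin : hatMat n i j - SM E i j
        = ((hatMat n i j - SM E i j) * D) * (↑u⁻¹ : S n) := by
      rw [mul_assoc]
      rw [hD, ← hu]
      rw [← Units.val_mul, mul_inv_cancel, Units.val_one, mul_one]
    rw [hfin]
    exact Ideal.mul_mem_right _ _ hMtmem

/-- The substitution endomorphism sending each variable to the tree "covariance". -/
def piHom : S n →ₐ[ℂ] S n :=
  aeval (fun p : {p : Sym2 (Fin n) // ¬ p.IsDiag} =>
    Sym2.lift ⟨fun a b => SM E a b, fun a b => SM_symm E a b⟩ p.1)

lemma piHom_hatMat (a b : Fin n) : piHom E (hatMat n a b) = SM E a b := by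
  unfold hatMat
  rcases eq_or_ne a b with rfl | hab
  · rw [dif_pos rfl, _root_.map_one, SM_self]
  · rw [dif_neg hab]
    unfold piHom
    rw [aeval_X]
    exact Sym2.lift_mk _ a b

open SimpleGraph in
lemma binom_mem' (hE : ∀ i j, E i j → i < j) (hac : (underGraph' E).IsAcyclic) (a b : Fin n) :
    hatMat n a b - SM E a b ∈ impIdealHat' E := by
  rcases lt_trichotomy a b with h1 | h1 | h1
  · exact binom_mem E hE hac b.val b a rfl h1
  · rw [h1]
    have h2 : hatMat n b b = 1 := by simp [hatMat]
    rw [h2, SM_self, sub_self]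
    exact zero_mem _
  · rw [hatMat_symm, SM_symm]
    exact binom_mem E hE hac a.val a b rfl h1

open SimpleGraph in
lemma sub_piHom_mem (hE : ∀ i j, E i j → i < j) (hac : (underGraph' E).IsAcyclic) (f : S n) :
    f - piHom E f ∈ impIdealHat' E := by
  induction f using MvPolynomial.induction_on with
  | C a =>
    rw [show (piHom E) (C a) = C a from aeval_C _ a, sub_self]
    exact zero_mem _
  | add p r hp hr =>
    rw [map_add]
    have := (impIdealHat' E).add_mem hp hr
    convert this using 1
    ring
  | mul_X p s hp =>
    rw [_root_.map_mul]
    have hX : X s - piHom E (X s) ∈ impIdealHat' E := by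
      obtain ⟨q, hq⟩ := s
      induction q using Sym2.ind with
      | _ a b =>
        have hab : a ≠ b := by simpa [Sym2.mk_isDiag_iff] using hq
        have h1 : (X ⟨Sym2.mk a b, hq⟩ : S n) = hatMat n a b := by
          unfold hatMat
          rw [dif_neg hab]
        have h2 : piHom E (X ⟨Sym2.mk a b, hq⟩) = SM E a b := by
          unfold piHom
          rw [aeval_X]
          exact Sym2.lift_mk _ a b
        rw [h2, h1]
        exact binom_mem' E hE hac a b
    have hcomb : p * X s - piHom E p * piHom E (X s)
        = X s * (p - piHom E p) + piHom E p * (X s - piHom E (X s)) := by ring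
    rw [hcomb]
    exact (impIdealHat' E).add_mem ((impIdealHat' E).mul_mem_left _ hp)
      ((impIdealHat' E).mul_mem_left _ hX)

lemma ideal_le_ker_piHom (hE : ∀ i j, E i j → i < j) :
    impIdealHat' E ≤ RingHom.ker (piHom E).toRingHom := by
  unfold impIdealHat'
  rw [Ideal.span_le]
  rintro f ⟨i, j, hij, hnE, h, rfl⟩
  simp only [SetLike.mem_coe, RingHom.mem_ker, AlgHom.toRingHom_eq_coe, RingHom.coe_coe]
  rw [AlgHom.map_det, AlgHom.mapMatrix_apply]
  have hmap : ((Matrix.of fun k l : Fin (insert i (parents E j)).card =>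
      hatMat n ((insert i (parents E j)).orderEmbOfFin rfl k)
        ((insert j (parents E j)).orderEmbOfFin h l))).map (piHom E)
      = Matrix.of fun k l : Fin (insert i (parents E j)).card =>
        SM E ((insert i (parents E j)).orderEmbOfFin rfl k)
          ((insert j (parents E j)).orderEmbOfFin h l) := by
    funext r l
    rw [Matrix.map_apply]
    exact piHom_hatMat E _ _
  rw [hmap]
  apply det_SM_minor_zero E hE
  intro x hx
  rcases Finset.mem_insert.mp hx with h1 | h1
  · exact h1 ▸ hij
  · exact mem_parents_lt E hE h1

open SimpleGraph in
lemma impIdealHat'_eq_ker (hE : ∀ i j, E i j → i < j) (hac : (underGraph' E).IsAcyclic) :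
    impIdealHat' E = RingHom.ker (piHom E).toRingHom := by
  refine le_antisymm (ideal_le_ker_piHom E hE) ?_
  intro f hf
  rw [RingHom.mem_ker] at hf
  have h2 := sub_piHom_mem E hE hac f
  simp only [AlgHom.toRingHom_eq_coe, RingHom.coe_coe] at hf
  rwa [hf, sub_zero] at h2

open SimpleGraph in
lemma impIdealHat'_isPrime (hE : ∀ i j, E i j → i < j) (hac : (underGraph' E).IsAcyclic) :
    (impIdealHat' E).IsPrime := by
  rw [impIdealHat'_eq_ker E hE hac]
  exact RingHom.ker_isPrime _

def ev0 : S n →ₐ[ℂ] ℂ := aeval (fun _ : {p : Sym2 (Fin n) // ¬ p.IsDiag} => (0 : ℂ))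

lemma ideal_le_ker_ev0 (hE : ∀ i j, E i j → i < j) :
    impIdealHat' E ≤ RingHom.ker (ev0 (n := n)).toRingHom := by
  unfold impIdealHat'
  rw [Ideal.span_le]
  rintro f ⟨i, j, hij, hnE, h, rfl⟩
  simp only [SetLike.mem_coe, RingHom.mem_ker, AlgHom.toRingHom_eq_coe, RingHom.coe_coe]
  rw [AlgHom.map_det, AlgHom.mapMatrix_apply]
  have hrangeA : ∃ r₀, (insert i (parents E j)).orderEmbOfFin rfl r₀ = i := by
    have h1 := Finset.range_orderEmbOfFin (insert i (parents E j)) rfl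
    rw [Set.ext_iff] at h1
    exact (h1 i).mpr (by simpa using Finset.mem_insert_self i (parents E j))
  obtain ⟨r₀, hr₀⟩ := hrangeA
  apply Matrix.det_eq_zero_of_row_eq_zero r₀
  intro l
  rw [Matrix.map_apply, Matrix.of_apply, hr₀]
  have hne : i ≠ (insert j (parents E j)).orderEmbOfFin h l := by
    intro hcon
    have h2 := Finset.orderEmbOfFin_mem (insert j (parents E j)) h l
    rw [← hcon] at h2
    rcases Finset.mem_insert.mp h2 with h3 | h3
    · exact hij.ne h3
    · simp only [parents, Finset.mem_filter] at h3
      exact hnE h3.2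
  unfold hatMat
  rw [dif_neg hne]
  unfold ev0
  rw [aeval_X]

lemma ev0_det_principal (A : Finset (Fin n)) :
    ev0 (n := n) ((Matrix.of fun k l : Fin A.card =>
      hatMat n (A.orderEmbOfFin rfl k) (A.orderEmbOfFin rfl l)).det) = 1 := by
  rw [AlgHom.map_det, AlgHom.mapMatrix_apply]
  have h1 : (Matrix.of fun k l : Fin A.card =>
      hatMat n (A.orderEmbOfFin rfl k) (A.orderEmbOfFin rfl l)).map (ev0 (n := n))
      = (1 : Matrix (Fin A.card) (Fin A.card) ℂ) := by
    funext k l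
    rw [Matrix.map_apply, Matrix.of_apply]
    rcases eq_or_ne k l with rfl | hkl
    · rw [Matrix.one_apply_eq]
      unfold hatMat
      rw [dif_pos rfl, _root_.map_one]
    · rw [Matrix.one_apply_ne hkl]
      unfold hatMat
      rw [dif_neg (fun hc => hkl ((A.orderEmbOfFin rfl).injective hc))]
      unfold ev0
      rw [aeval_X]
  rw [h1, Matrix.det_one]

end TreeProof

/-- Proposition 8 of the paper: for a directed tree model `T`, the ideal `Î_T` of imposed
relations (with unit diagonal) is prime; in particular it equals its saturation `p̂_T`. -/
theorem impIdealHat_isPrime_of_tree {n : ℕ} (hn : 1 ≤ n)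
    (E : Fin n → Fin n → Prop) [DecidableRel E] (hE : ∀ i j, E i j → i < j)
    (htree : (underGraph E).IsTree) :
    (impIdealHat E).IsPrime ∧ impIdealHat E = satPGhat E := by
  classical
  have hac : (TreeProof.underGraph' E).IsAcyclic := htree.IsAcyclic
  have heq : impIdealHat E = TreeProof.impIdealHat' E := rfl
  have hprime : (impIdealHat E).IsPrime := by
    rw [heq]
    exact TreeProof.impIdealHat'_isPrime E hE hac
  refine ⟨hprime, ?_⟩
  have htheta : thetaHat n ∉ impIdealHat E := by
    intro hmem
    rw [heq] at hmem
    have h2 := TreeProof.ideal_le_ker_ev0 E hE hmem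
    rw [RingHom.mem_ker] at h2
    have h3 : TreeProof.ev0 (n := n) (thetaHat n) = 1 := by
      unfold thetaHat
      rw [map_prod]
      have h4 : ∀ A : Finset (Fin n),
          TreeProof.ev0 (n := n) (fminor (hatMat n) A A rfl) = 1 := fun A =>
        TreeProof.ev0_det_principal A
      simp [h4]
    simp only [AlgHom.toRingHom_eq_coe, RingHom.coe_coe] at h2
    rw [h3] at h2
    exact one_ne_zero h2
  apply le_antisymm
  · intro f hf
    exact ⟨0, by rw [pow_zero, one_mul]; exact hf⟩
  · rintro f ⟨m, hm⟩
    rcases hprime.mem_or_mem hm with h4 | h4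
    · exact absurd (hprime.mem_of_pow_mem m h4) htheta
    · exact h4
end
end

section
/- There exist a sequence (σₖ) of real symmetric positive definite 4 × 4 matrices and a real symmetric positive semidefinite 4 × 4 matrix σ such that σₖ converges to σ entrywise, for every k the 3 × 3 minor of σₖ with rows (0,1,3) and columns (2,1,3) equals 0 (so, σₖ being positive definite, the Gaussian with covariance σₖ satisfies X₀ ⫫ X₂ | (X₁,X₃)), yet the rank of the submatrix of σ with rows (0,1,3) and columns (2,1,3) differs from the rank of the submatrix of σ with rows (1,3) and columns (1,3) (so the Gaussian limit does not satisfy X₀ ⫫ X₂ | (X₁,X₃)). Consequently, the set of positive semidefinite matrices satisfying the Gaussian conditional-independence rank condition is not closed. -/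
open Matrix Filter

noncomputable def ciFmat (t : ℝ) : Matrix (Fin 4) (Fin 4) ℝ :=
  !![1, t*(1-t), (1-t)^2, 0;
     t*(1-t), t^2, t*(1-t), 0;
     (1-t)^2, t*(1-t), 1, 0;
     0, 0, 0, t^2]

theorem ci_quad_pos (t a b c d : ℝ) (ht : 0 < t) (ht1 : t ≤ 1)
    (hne : a ≠ 0 ∨ b ≠ 0 ∨ c ≠ 0 ∨ d ≠ 0) :
    0 < a*(1*a + t*(1-t)*b + (1-t)^2*c + 0*d)
      + b*(t*(1-t)*a + t^2*b + t*(1-t)*c + 0*d)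
      + c*((1-t)^2*a + t*(1-t)*b + 1*c + 0*d)
      + d*(0*a + 0*b + 0*c + t^2*d) := by
  have key : a*(1*a + t*(1-t)*b + (1-t)^2*c + 0*d)
      + b*(t*(1-t)*a + t^2*b + t*(1-t)*c + 0*d)
      + c*((1-t)^2*a + t*(1-t)*b + 1*c + 0*d)
      + d*(0*a + 0*b + 0*c + t^2*d)
      = ((1-t)*(a+c) + t*b)^2 + (t*(2-t))*(a^2 + c^2) + t^2*d^2 := by ring
  rw [key]
  have h1 : (0:ℝ) < t*(2-t) := by nlinarith
  rcases hne with h | h | h | h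
  · have ha : 0 < a^2 := by positivity
    nlinarith [sq_nonneg ((1-t)*(a+c)+t*b), sq_nonneg d, mul_pos h1 ha,
      mul_nonneg h1.le (sq_nonneg c)]
  · rcases eq_or_ne (a^2 + c^2) 0 with h0 | h0
    · have ha : a = 0 := by nlinarith [sq_nonneg a, sq_nonneg c]
      have hc : c = 0 := by nlinarith [sq_nonneg a, sq_nonneg c]
      subst ha; subst hc
      have : 0 < (t*b)^2 := by positivity
      nlinarith [sq_nonneg d]
    · have h0' : 0 < a^2 + c^2 := lt_of_le_of_ne (by positivity) (Ne.symm h0)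
      nlinarith [sq_nonneg ((1-t)*(a+c)+t*b), sq_nonneg d, mul_pos h1 h0']
  · have hc : 0 < c^2 := by positivity
    nlinarith [sq_nonneg ((1-t)*(a+c)+t*b), sq_nonneg d, mul_pos h1 hc,
      mul_nonneg h1.le (sq_nonneg a)]
  · have hd : 0 < d^2 := by positivity
    nlinarith [sq_nonneg ((1-t)*(a+c)+t*b), mul_nonneg h1.le (sq_nonneg a),
      mul_nonneg h1.le (sq_nonneg c), mul_pos (mul_pos ht ht) hd]

theorem ciFmat_posDef {t : ℝ} (ht : 0 < t) (ht1 : t ≤ 1) : (ciFmat t).PosDef := by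
  rw [Matrix.posDef_iff_dotProduct_mulVec]
  constructor
  · ext i j
    fin_cases i <;> fin_cases j <;>
      simp [ciFmat, Matrix.conjTranspose_apply] <;> ring
  · intro x hx
    have hne : x 0 ≠ 0 ∨ x 1 ≠ 0 ∨ x 2 ≠ 0 ∨ x 3 ≠ 0 := by
      by_contra h
      push_neg at h
      apply hx
      ext i
      fin_cases i <;> simp [h.1, h.2.1, h.2.2.1, h.2.2.2]
    simp only [ciFmat, dotProduct, Matrix.mulVec, Fin.sum_univ_four,
      Matrix.cons_val', Matrix.cons_val_zero, Matrix.cons_val_one, Matrix.head_cons,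
      Matrix.empty_val', Matrix.cons_val_fin_one, Matrix.head_fin_const,
      Matrix.of_apply, Pi.star_apply, star_trivial, Matrix.cons_val_two,
      Matrix.tail_cons, Matrix.cons_val_three]
    have := ci_quad_pos t (x 0) (x 1) (x 2) (x 3) ht ht1 hne
    linarith [this]

/-- Example 1 of the paper: conditional independence is not preserved under weak limits of
Gaussians, so `loc(G)` is not closed. There is a sequence of positive definite covariance
matrices satisfying `X₀ ⫫ X₂ | (X₁, X₃)` (the minor with rows `(0,1,3)` and columns `(2,1,3)`
vanishes) converging to a positive semidefinite matrix violating the corresponding rank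
condition. -/
theorem exists_posDef_seq_ci_limit_not_ci :
    ∃ (σseq : ℕ → Matrix (Fin 4) (Fin 4) ℝ) (σ : Matrix (Fin 4) (Fin 4) ℝ),
      (∀ k, (σseq k).PosDef) ∧
      σ.PosSemidef ∧
      Tendsto σseq atTop (nhds σ) ∧
      (∀ k, ((σseq k).submatrix ![0, 1, 3] ![2, 1, 3]).det = 0) ∧
      (σ.submatrix ![0, 1, 3] ![2, 1, 3]).rank ≠ (σ.submatrix ![1, 3] ![1, 3]).rank := by
  refine ⟨fun k => ciFmat (1 / (k + 1)), ciFmat 0, ?_, ?_, ?_, ?_, ?_⟩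
  · intro k
    refine ciFmat_posDef ?_ ?_
    · positivity
    · rw [div_le_one (by positivity)]
      have : (0:ℝ) ≤ (k:ℝ) := Nat.cast_nonneg k
      linarith
  · rw [Matrix.posSemidef_iff_dotProduct_mulVec]
    constructor
    · ext i j
      fin_cases i <;> fin_cases j <;>
        simp [ciFmat, Matrix.conjTranspose_apply, Matrix.vecHead, Matrix.vecTail]
    · intro x
      have key : (star x) ⬝ᵥ ((ciFmat 0) *ᵥ x) = (x 0 + x 2)^2 := by
        simp [ciFmat, dotProduct, Matrix.mulVec, Fin.sum_univ_four, Matrix.vecHead, Matrix.vecTail]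
        ring
      rw [key]
      positivity
  · have hcont : Continuous ciFmat := by
      apply continuous_matrix
      intro i j
      fin_cases i <;> fin_cases j <;> simp [ciFmat] <;> fun_prop
    exact (hcont.tendsto 0).comp tendsto_one_div_add_atTop_nhds_zero_nat
  · intro k
    have : ∀ t : ℝ, ((ciFmat t).submatrix ![0, 1, 3] ![2, 1, 3]).det = 0 := by
      intro t
      rw [Matrix.det_fin_three]
      simp [ciFmat, Matrix.det_fin_three, Matrix.submatrix_apply, Matrix.vecHead, Matrix.vecTail]
      ring
    exact this _
  · have hzero : (ciFmat 0).submatrix ![1, 3] ![1, 3] = 0 := by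
      ext i j
      fin_cases i <;> fin_cases j <;>
        simp [ciFmat, Matrix.submatrix_apply, Matrix.vecHead, Matrix.vecTail]
    rw [hzero, Matrix.rank_zero]
    intro h
    have hrange : LinearMap.range ((ciFmat 0).submatrix ![0, 1, 3] ![2, 1, 3]).mulVecLin = ⊥ :=
      Submodule.finrank_eq_zero.mp h
    have h0 : ((ciFmat 0).submatrix ![0, 1, 3] ![2, 1, 3]).mulVecLin ![1, 0, 0] = 0 := by
      rw [LinearMap.range_eq_bot.mp hrange]
      rfl
    have h1 : ((ciFmat 0).submatrix ![0, 1, 3] ![2, 1, 3]).mulVecLin ![1, 0, 0] 0 = 1 := by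
      rw [Matrix.mulVecLin_apply]
      simp [ciFmat, Matrix.mulVecLin_apply, Matrix.mulVec, dotProduct,
        Fin.sum_univ_three, Matrix.submatrix_apply]
    rw [h0] at h1
    simp at h1
end
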